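/- arXiv:1110.6263 — 7 statements merged into one kernel-verified Lean document; each statement's English description precedes it below -/
import Mathlib

section
/- Let Γ be an infinite connected d-regular graph, G a finite connected induced subgraph, and χ a stable sandpile configuration on G (each vertex has height between 1 and d). Fix v in G with χ(v) = d and let v_1, ..., v_k be a toppling sequence for the avalanche caused by adding a grain at v. If the vertices v_1, ..., v_k are not all distinct, then the first vertex that is repeated in the sequence is v itself. -/
open SimpleGraph

/-- The (not necessarily stable) configuration obtained from `χ` by adding one grain
at `v` and toppling, in order, the vertices of the list `l` (each toppling removes
`d` grains and sends one grain to each neighbor in the ambient graph `Γ`;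
all toppled vertices are required to lie in the finite subgraph). -/
noncomputable def sandConf {V : Type*} [DecidableEq V] (Γ : SimpleGraph V)
    [DecidableRel Γ.Adj] (d : ℕ) (χ : V → ℤ) (v : V) (l : List V) (u : V) : ℤ :=
  χ u + (if u = v then 1 else 0)
    + ((l.countP fun w => decide (Γ.Adj w u) : ℕ) : ℤ) - (d : ℤ) * (l.count u : ℤ)

/-- `l` is a toppling sequence for the avalanche caused by adding a grain at `v` to
the configuration `χ` on the induced subgraph of `Γ` on the vertex set `s`:
every toppled vertex lies in `s` and is unstable (height `> d`) at the moment it is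
toppled, and the final configuration is stable on `s`. -/
def IsTopplingSeq {V : Type*} [DecidableEq V] (Γ : SimpleGraph V) [DecidableRel Γ.Adj]
    (d : ℕ) (s : Set V) (χ : V → ℤ) (v : V) (l : List V) : Prop :=
  (∀ x ∈ l, x ∈ s) ∧
  (∀ i : Fin l.length, (d : ℤ) < sandConf Γ d χ v (l.take i) (l.get i)) ∧
  (∀ u ∈ s, sandConf Γ d χ v l u ≤ d)

/-- A configuration is stable on `s` when every height is between 1 and `d`. -/
def IsStableConf {V : Type*} (d : ℕ) (s : Set V) (χ : V → ℤ) : Prop :=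
  ∀ u ∈ s, 1 ≤ χ u ∧ χ u ≤ (d : ℤ)

theorem stmt_6 {V : Type*} [DecidableEq V] (Γ : SimpleGraph V) [DecidableRel Γ.Adj]
    [Γ.LocallyFinite] (d : ℕ) (hconn : Γ.Connected) (hinf : Infinite V)
    (hreg : Γ.IsRegularOfDegree d)
    (s : Set V) (hsfin : s.Finite) (hsconn : (Γ.induce s).Connected)
    (χ : V → ℤ) (hstable : IsStableConf d s χ)
    (v : V) (hv : v ∈ s) (hχv : χ v = (d : ℤ))
    (l : List V) (hl : IsTopplingSeq Γ d s χ v l)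
    (hrep : ¬ l.Nodup)
    (t : Fin l.length) (ht : l.get t ∈ l.take t)
    (hfirst : ∀ t' : Fin l.length, t' < t → l.get t' ∉ l.take t') :
    l.get t = v := by
  by_contra hne
  set u := l.get t with hu
  set m := l.take (t : ℕ) with hm
  have hmlen : m.length ≤ (t : ℕ) := by
    simpa [hm] using List.length_take_le (t : ℕ) l
  -- m is nodup since t is the first repetition
  have hnd : m.Nodup := by
    rw [List.nodup_iff_injective_get]
    intro i j hij
    by_contra hne'
    rcases lt_or_gt_of_ne (Fin.val_ne_iff.mpr hne') with h | h
    · -- i < j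
      have hjl : (j : ℕ) < l.length := lt_of_lt_of_le (lt_of_lt_of_le j.isLt hmlen) t.isLt.le
      have hjt : (⟨(j : ℕ), hjl⟩ : Fin l.length) < t := by
        rw [Fin.lt_def]; exact lt_of_lt_of_le j.isLt hmlen
      apply hfirst ⟨(j : ℕ), hjl⟩ hjt
      have hgj : l.get ⟨(j : ℕ), hjl⟩ = m.get j := by
        simp [hm, List.getElem_take]
      have hgi : m.get i ∈ l.take (j : ℕ) := by
        have hil : (i : ℕ) < l.length := lt_of_lt_of_le (lt_of_lt_of_le i.isLt hmlen) t.isLt.le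
        have h1 : (l.take (j : ℕ))[(i : ℕ)]'(by
            simp [List.length_take]
            exact ⟨h, hil⟩) = l[(i : ℕ)] := List.getElem_take ..
        have : m.get i = l[(i : ℕ)] := by simp [hm, List.getElem_take]
        rw [this, ← h1]
        exact List.getElem_mem _
      rw [hgj, ← hij]
      exact hgi
    · -- j < i
      have hil : (i : ℕ) < l.length := lt_of_lt_of_le (lt_of_lt_of_le i.isLt hmlen) t.isLt.le
      have hit : (⟨(i : ℕ), hil⟩ : Fin l.length) < t := by
        rw [Fin.lt_def]; exact lt_of_lt_of_le i.isLt hmlen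
      apply hfirst ⟨(i : ℕ), hil⟩ hit
      have hgi : l.get ⟨(i : ℕ), hil⟩ = m.get i := by
        simp [hm, List.getElem_take]
      have hgj : m.get j ∈ l.take (i : ℕ) := by
        have hjl : (j : ℕ) < l.length := lt_of_lt_of_le (lt_of_lt_of_le j.isLt hmlen) t.isLt.le
        have h1 : (l.take (i : ℕ))[(j : ℕ)]'(by
            simp [List.length_take]
            exact ⟨h, hjl⟩) = l[(j : ℕ)] := List.getElem_take ..
        have : m.get j = l[(j : ℕ)] := by simp [hm, List.getElem_take]
        rw [this, ← h1]
        exact List.getElem_mem _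
      rw [hgi, hij]
      exact hgj
  obtain ⟨hmem, hunst, hfin⟩ := hl
  have hus : u ∈ s := hmem u (by rw [hu, List.get_eq_getElem]; exact List.getElem_mem _)
  have hχu : χ u ≤ (d : ℤ) := (hstable u hus).2
  -- count of neighbors in m is at most d
  have hcountP : (m.countP fun w => decide (Γ.Adj w u)) ≤ d := by
    rw [List.countP_eq_length_filter]
    have hndf : (m.filter fun w => decide (Γ.Adj w u)).Nodup := hnd.filter _
    have hsub : (m.filter fun w => decide (Γ.Adj w u)).toFinset ⊆ Γ.neighborFinset u := by
      intro x hx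
      rw [List.mem_toFinset, List.mem_filter] at hx
      rw [SimpleGraph.mem_neighborFinset]
      exact (of_decide_eq_true hx.2).symm
    have := Finset.card_le_card hsub
    rwa [List.toFinset_card_of_nodup hndf, show (Γ.neighborFinset u).card = d from hreg u]
      at this
  have hcount : 1 ≤ m.count u := List.count_pos_iff.mpr ht
  have hkey := hunst t
  rw [← hm, ← hu] at hkey
  unfold sandConf at hkey
  rw [if_neg hne] at hkey
  have h1 : ((m.countP fun w => decide (Γ.Adj w u) : ℕ) : ℤ) ≤ (d : ℤ) := by
    exact_mod_cast hcountP
  have h2 : (d : ℤ) * 1 ≤ (d : ℤ) * (m.count u : ℤ) := by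
    apply mul_le_mul_of_nonneg_left _ (by positivity)
    exact_mod_cast hcount
  linarith
end

section
/- Let Γ be an infinite connected d-regular graph, G a finite connected induced subgraph, χ a stable configuration on G, and v a vertex with χ(v) = d. Then v topples more than once in the avalanche caused by adding a grain at v if and only if v has exactly d neighbors in G and every neighbor of v topples. In particular, if the degree of v in G is less than d, then no vertex topples more than once in this avalanche. -/
open SimpleGraph

/-- In a list that is not duplicate-free, there is a first repeated element: an index
`j` such that the prefix before `j` is duplicate-free but contains `l.get j`. -/
lemma exists_first_dup {V : Type*} [DecidableEq V] {l : List V} (h : ¬ l.Nodup) :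
    ∃ j : Fin l.length, (l.take j).Nodup ∧ l.get j ∈ l.take j := by
  classical
  have hne : l ≠ [] := by rintro rfl; exact h List.nodup_nil
  have hlen : 1 ≤ l.length := List.length_pos_iff.2 hne
  have hP : ∃ n, ¬ (l.take (n+1)).Nodup :=
    ⟨l.length - 1, by rwa [Nat.sub_add_cancel hlen, List.take_length]⟩
  set j := Nat.find hP with hjdef
  have hjle : j ≤ l.length - 1 := Nat.find_le (by
    rwa [Nat.sub_add_cancel hlen, List.take_length])
  have hjlt : j < l.length := lt_of_le_of_lt hjle (by omega)
  have hnd : (l.take j).Nodup := by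
    rcases Nat.eq_zero_or_pos j with h0 | h0
    · rw [h0]; simp
    · have := Nat.find_min hP (show j - 1 < j by omega)
      rw [not_not] at this
      have : (l.take ((j-1)+1)).Nodup := this
      rwa [show j - 1 + 1 = j by omega] at this
  have hspec : ¬ (l.take (j+1)).Nodup := Nat.find_spec hP
  have hsucc : l.take (j+1) = l.take j ++ [l.get ⟨j, hjlt⟩] := by
    rw [List.take_succ]
    congr 1
    simp [List.getElem?_eq_getElem hjlt, List.get_eq_getElem]
  refine ⟨⟨j, hjlt⟩, hnd, ?_⟩
  by_contra hmem
  apply hspec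
  rw [hsucc, List.nodup_append]
  refine ⟨hnd, List.nodup_singleton _, ?_⟩
  intro a ha b hb hab
  simp only [List.mem_singleton] at hb
  exact hmem (hb ▸ hab ▸ ha)

/-- For a duplicate-free list in a `d`-regular graph, the number of entries adjacent
to `u` is at most `d`. -/
lemma countP_adj_le {V : Type*} [DecidableEq V] (Γ : SimpleGraph V) [DecidableRel Γ.Adj]
    [Γ.LocallyFinite] {d : ℕ} (hreg : Γ.IsRegularOfDegree d) (u : V) {p : List V}
    (hp : p.Nodup) : (p.countP fun w => decide (Γ.Adj w u)) ≤ d := by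
  classical
  rw [List.countP_eq_length_filter]
  have hnd : (p.filter fun w => decide (Γ.Adj w u)).Nodup := hp.filter _
  rw [← List.toFinset_card_of_nodup hnd]
  calc (p.filter fun w => decide (Γ.Adj w u)).toFinset.card
      ≤ (Γ.neighborFinset u).card := by
        apply Finset.card_le_card
        intro w hw
        rw [List.mem_toFinset, List.mem_filter] at hw
        rw [SimpleGraph.mem_neighborFinset]
        exact (of_decide_eq_true hw.2).symm
    _ = d := hreg u

/-- Equality case: if moreover the count equals `d`, every neighbor of `u` lies in the
list. -/
lemma mem_of_countP_adj_eq {V : Type*} [DecidableEq V] (Γ : SimpleGraph V)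
    [DecidableRel Γ.Adj] [Γ.LocallyFinite] {d : ℕ} (hreg : Γ.IsRegularOfDegree d)
    (u : V) {p : List V} (hp : p.Nodup)
    (heq : (p.countP fun w => decide (Γ.Adj w u)) = d) :
    ∀ w, Γ.Adj u w → w ∈ p := by
  classical
  set T := (p.filter fun w => decide (Γ.Adj w u)).toFinset with hT
  have hnd : (p.filter fun w => decide (Γ.Adj w u)).Nodup := hp.filter _
  have hsub : T ⊆ Γ.neighborFinset u := by
    intro w hw
    rw [hT, List.mem_toFinset, List.mem_filter] at hw
    rw [SimpleGraph.mem_neighborFinset]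
    exact (of_decide_eq_true hw.2).symm
  have hcard : (Γ.neighborFinset u).card ≤ T.card := by
    rw [hT, List.toFinset_card_of_nodup hnd, ← List.countP_eq_length_filter, heq]
    exact le_of_eq (hreg u)
  have hTeq : T = Γ.neighborFinset u := Finset.eq_of_subset_of_card_le hsub hcard
  intro w hw
  have : w ∈ T := by rw [hTeq, SimpleGraph.mem_neighborFinset]; exact hw
  rw [hT, List.mem_toFinset, List.mem_filter] at this
  exact this.1

/-- Lower bound: if every neighbor of `u` lies in the list, the count of entries
adjacent to `u` is at least `d`. -/
lemma le_countP_adj {V : Type*} [DecidableEq V] (Γ : SimpleGraph V) [DecidableRel Γ.Adj]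
    [Γ.LocallyFinite] {d : ℕ} (hreg : Γ.IsRegularOfDegree d) (u : V) {p : List V}
    (h : ∀ w, Γ.Adj u w → w ∈ p) :
    d ≤ (p.countP fun w => decide (Γ.Adj w u)) := by
  classical
  rw [List.countP_eq_length_filter]
  calc d = (Γ.neighborFinset u).card := (hreg u).symm
    _ ≤ (p.filter fun w => decide (Γ.Adj w u)).toFinset.card := by
        apply Finset.card_le_card
        intro w hw
        rw [SimpleGraph.mem_neighborFinset] at hw
        rw [List.mem_toFinset, List.mem_filter]
        exact ⟨h w hw, decide_eq_true hw.symm⟩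
    _ ≤ (p.filter fun w => decide (Γ.Adj w u)).length := List.toFinset_card_le _

theorem stmt_7 {V : Type*} [DecidableEq V] (Γ : SimpleGraph V) [DecidableRel Γ.Adj]
    [Γ.LocallyFinite] (d : ℕ) (hconn : Γ.Connected) (hinf : Infinite V)
    (hreg : Γ.IsRegularOfDegree d)
    (s : Set V) (hsfin : s.Finite) (hsconn : (Γ.induce s).Connected)
    (χ : V → ℤ) (hstable : IsStableConf d s χ)
    (v : V) (hv : v ∈ s) (hχv : χ v = (d : ℤ))
    (l : List V) (hl : IsTopplingSeq Γ d s χ v l) :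
    (1 < l.count v ↔ ((∀ u, Γ.Adj v u → u ∈ s) ∧ ∀ u, Γ.Adj v u → u ∈ l)) ∧
    ((∃ u, Γ.Adj v u ∧ u ∉ s) → ∀ u, l.count u ≤ 1) := by
  classical
  obtain ⟨hls, hleg, hfin⟩ := hl
  -- d ≥ 1
  have hd1 : 1 ≤ d := by
    obtain ⟨w, hwv⟩ := exists_ne v
    have hr : Γ.Reachable v w := hconn.preconnected v w
    obtain ⟨p⟩ := hr
    have hadj : ∃ u, Γ.Adj v u := by
      cases p with
      | nil => exact absurd rfl hwv
      | cons h _ => exact ⟨_, h⟩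
    have : 0 < Γ.degree v := (Γ.degree_pos_iff_exists_adj v).2 hadj
    rw [hreg v] at this
    exact this
  -- Key: if l has a duplicate, then every neighbor of v is in l, and v repeats.
  have key : ¬ l.Nodup → (∀ w, Γ.Adj v w → w ∈ l) ∧ 1 < l.count v := by
    intro hnd
    obtain ⟨j, hjnd, hjmem⟩ := exists_first_dup hnd
    have hus : l.get j ∈ s := hls _ ((List.take_sublist _ _).mem hjmem)
    have hc : 1 ≤ (l.take (j : ℕ)).count (l.get j) := List.count_pos_iff.2 hjmem
    have hleg' := hleg j
    rw [sandConf] at hleg'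
    have hN : ((l.take (j : ℕ)).countP fun w => decide (Γ.Adj w (l.get j))) ≤ d :=
      countP_adj_le Γ hreg _ hjnd
    have hχu : χ (l.get j) ≤ (d : ℤ) := (hstable _ hus).2
    have hdc : (d : ℤ) ≤ (d : ℤ) * ((l.take (j : ℕ)).count (l.get j) : ℤ) := by
      have h1 : (1 : ℤ) ≤ ((l.take (j : ℕ)).count (l.get j) : ℤ) := by exact_mod_cast hc
      nlinarith
    have huv : l.get j = v := by
      by_contra huv
      rw [if_neg huv] at hleg'
      have hNZ : (((l.take (j : ℕ)).countP fun w => decide (Γ.Adj w (l.get j))) : ℤ)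
          ≤ (d : ℤ) := by exact_mod_cast hN
      linarith
    rw [huv] at hleg' hjmem hN hc hdc hχu
    rw [if_pos rfl, hχv] at hleg'
    -- d < d + 1 + N - d c  with  d ≤ d c,  N ≤ d   ⟹   N = d
    have hNeq : ((l.take (j : ℕ)).countP fun w => decide (Γ.Adj w v)) = d := by
      have hNZ : (((l.take (j : ℕ)).countP fun w => decide (Γ.Adj w v)) : ℤ) ≤ (d : ℤ) := by
        exact_mod_cast hN
      have hlt : (d : ℤ) * ((l.take (j : ℕ)).count v : ℤ) - 1
          < ((l.take (j : ℕ)).countP fun w => decide (Γ.Adj w v)) := by linarith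
      have h2 := Int.lt_iff_add_one_le.mp hlt
      have hge : (d : ℤ) ≤ (((l.take (j : ℕ)).countP fun w => decide (Γ.Adj w v)) : ℤ) := by
        linarith
      exact_mod_cast le_antisymm hNZ (by exact_mod_cast hge)
    have hnbr : ∀ w, Γ.Adj v w → w ∈ l.take (j : ℕ) :=
      mem_of_countP_adj_eq Γ hreg v hjnd hNeq
    constructor
    · intro w hw
      exact (List.take_sublist _ _).mem (hnbr w hw)
    · -- v occurs in the prefix and at position j, so count ≥ 2
      have h2 : (l.take (j : ℕ)).count v + 1 ≤ l.count v := by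
        have hsucc : l.take ((j : ℕ)+1) = l.take (j : ℕ) ++ [v] := by
          rw [List.take_succ]
          congr 1
          simp [List.getElem?_eq_getElem j.isLt, ← huv, List.get_eq_getElem]
        have := (List.take_sublist ((j : ℕ)+1) l).count_le v
        rw [hsucc, List.count_append] at this
        simpa using this
      omega
  constructor
  · constructor
    · -- forward
      intro hcount
      have hnd : ¬ l.Nodup := by
        intro hnd
        exact absurd (List.nodup_iff_count_le_one.1 hnd v) (by omega)
      obtain ⟨hmem, _⟩ := key hnd
      exact ⟨fun w hw => hls w (hmem w hw), hmem⟩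
    · -- backward
      rintro ⟨hins, hinl⟩
      have hfin' := hfin v hv
      rw [sandConf, if_pos rfl, hχv] at hfin'
      have hNge : (d : ℕ) ≤ (l.countP fun w => decide (Γ.Adj w v)) :=
        le_countP_adj Γ hreg v hinl
      have hNge' : (d : ℤ) ≤ ((l.countP fun w => decide (Γ.Adj w v)) : ℤ) := by
        exact_mod_cast hNge
      -- d + 1 + N - d*c ≤ d  ⟹  d*c ≥ N + 1 ≥ d + 1  ⟹  c ≥ 2
      by_contra hcount
      push_neg at hcount
      have hc1 : (l.count v : ℤ) ≤ 1 := by exact_mod_cast hcount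
      have hge0 : (0 : ℤ) ≤ (l.count v : ℤ) := by positivity
      have : (d : ℤ) * (l.count v : ℤ) ≤ (d : ℤ) * 1 := by
        apply mul_le_mul_of_nonneg_left hc1 (by positivity)
      linarith
  · -- if some neighbor is outside s, no vertex topples twice
    rintro ⟨u₀, hu₀, hu₀s⟩ w
    by_contra hcount
    push_neg at hcount
    have hnd : ¬ l.Nodup := by
      intro hnd
      exact absurd (List.nodup_iff_count_le_one.1 hnd w) (by omega)
    obtain ⟨hmem, _⟩ := key hnd
    exact hu₀s (hls u₀ (hmem u₀ hu₀))
end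

section
/- Let G be a finite connected subgraph of an infinite connected d-regular graph, χ a stable configuration, v a vertex with χ(v) = d, and v_1, ..., v_k a toppling sequence for the avalanche caused by adding a grain at v. For each t with 1 ≤ t ≤ k, the set S_t = {v_s : 1 ≤ s ≤ t} induces a connected subgraph of G containing v. -/
open SimpleGraph

lemma induce_singleton_connected {V : Type*} (Γ : SimpleGraph V) (v : V) :
    (Γ.induce {v}).Connected := by
  constructor
  rintro ⟨a, ha⟩ ⟨b, hb⟩
  simp only [Set.mem_singleton_iff] at ha hb
  subst ha; subst hb
  exact Reachable.refl _

lemma set_take_succ {V : Type*} (l : List V) (n : ℕ) (hn : n < l.length) :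
    {u | u ∈ l.take (n+1)} = {u | u ∈ l.take n} ∪ {l.get ⟨n, hn⟩} := by
  ext u
  rw [List.take_succ]
  simp only [Set.mem_union, Set.mem_setOf_eq, List.mem_append,
    List.getElem?_eq_getElem hn, Option.toList_some, List.mem_singleton,
    Set.mem_singleton_iff, List.get_eq_getElem]

theorem stmt_8 {V : Type*} [DecidableEq V] (Γ : SimpleGraph V) [DecidableRel Γ.Adj]
    [Γ.LocallyFinite] (d : ℕ) (hconn : Γ.Connected) (hinf : Infinite V)
    (hreg : Γ.IsRegularOfDegree d)
    (s : Set V) (hsfin : s.Finite) (hsconn : (Γ.induce s).Connected)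
    (χ : V → ℤ) (hstable : IsStableConf d s χ)
    (v : V) (hv : v ∈ s) (hχv : χ v = (d : ℤ))
    (l : List V) (hl : IsTopplingSeq Γ d s χ v l)
    (t : ℕ) (ht1 : 1 ≤ t) (ht2 : t ≤ l.length) :
    v ∈ {u | u ∈ l.take t} ∧ (Γ.induce {u | u ∈ l.take t}).Connected := by
  obtain ⟨hmem, hunst, -⟩ := hl
  revert ht2
  induction t, ht1 using Nat.le_induction with
  | base =>
    intro ht2
    have h0 : 0 < l.length := ht2
    have hget : l.get ⟨0, h0⟩ = v := by
      have h := hunst ⟨0, h0⟩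
      simp only [sandConf, List.take_zero, List.countP_nil, List.count_nil,
        Nat.cast_zero, mul_zero, add_zero, sub_zero] at h
      by_contra hne
      rw [if_neg hne] at h
      have hs' : l.get ⟨0, h0⟩ ∈ s := hmem _ (l.get_mem _)
      have := (hstable _ hs').2
      omega
    have hset : {u | u ∈ l.take 1} = {v} := by
      rw [show (1:ℕ) = 0 + 1 from rfl, set_take_succ l 0 h0, hget]
      simp
    rw [hset]
    exact ⟨rfl, induce_singleton_connected Γ v⟩
  | succ n hn ih =>
    intro ht2
    have hn' : n < l.length := ht2
    obtain ⟨ihv, ihc⟩ := ih (le_of_lt hn')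
    set w := l.get ⟨n, hn'⟩ with hw
    rw [set_take_succ l n hn']
    by_cases hmemw : w ∈ l.take n
    · have hset : {u | u ∈ l.take n} ∪ {w} = {u | u ∈ l.take n} := by
        apply Set.union_eq_self_of_subset_right
        simpa using hmemw
      rw [hset]
      exact ⟨ihv, ihc⟩
    · -- w is adjacent to some earlier vertex
      have hwv : w ≠ v := by
        intro h; exact hmemw (h ▸ ihv)
      have h := hunst ⟨n, hn'⟩
      rw [sandConf] at h
      have hc0 : (l.take n).count w = 0 := List.count_eq_zero.mpr hmemw
      have hws : w ∈ s := hmem _ (l.get_mem _)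
      have hwle : χ w ≤ (d : ℤ) := (hstable _ hws).2
      rw [← hw, if_neg hwv, hc0] at h
      have hcp : 0 < (l.take n).countP fun x => decide (Γ.Adj x w) := by
        by_contra hz
        push_neg at hz
        have h0' : ((l.take n).countP fun x => decide (Γ.Adj x w)) = 0 :=
          Nat.le_zero.mp hz
        rw [h0'] at h
        push_cast at h
        omega
      obtain ⟨x, hx, hxw⟩ := List.countP_pos_iff.mp hcp
      have hadj : Γ.Adj x w := of_decide_eq_true hxw
      have hset : {u | u ∈ l.take n} ∪ ({x, w} : Set V) =
          {u | u ∈ l.take n} ∪ {w} := by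
        ext u
        simp only [Set.mem_union, Set.mem_insert_iff, Set.mem_singleton_iff,
          Set.mem_setOf_eq]
        constructor
        · rintro (h | h | h)
          · exact Or.inl h
          · exact Or.inl (h ▸ hx)
          · exact Or.inr h
        · rintro (h | h)
          · exact Or.inl h
          · exact Or.inr (Or.inr h)
      constructor
      · exact Or.inl ihv
      · rw [← hset]
        refine induce_union_connected ihc.preconnected (induce_pair_connected_of_adj hadj).preconnected ?_
        exact ⟨x, hx, Or.inl rfl⟩
end

section
/- Let G be a finite graph with origin o, χ a stable configuration with χ(o) = d, and suppose v_1, ..., v_k is a toppling sequence for the avalanche caused by adding a grain at o in which no vertex appears more than once. If 1 ≤ i < j ≤ k and v_j is not adjacent to v_m for every m with i ≤ m < j, then the reordered sequence v_1, ..., v_{i-1}, v_j, v_i, ..., v_{j-1}, v_{j+1}, ..., v_k is also a toppling sequence for the same avalanche. -/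
open SimpleGraph

lemma sandConf_perm {V : Type*} [DecidableEq V] (Γ : SimpleGraph V)
    [DecidableRel Γ.Adj] (d : ℕ) (χ : V → ℤ) (v : V) {l₁ l₂ : List V} (h : l₁.Perm l₂) (u : V) :
    sandConf Γ d χ v l₁ u = sandConf Γ d χ v l₂ u := by
  unfold sandConf
  rw [h.countP_eq, h.count_eq]

lemma sandConf_append {V : Type*} [DecidableEq V] (Γ : SimpleGraph V)
    [DecidableRel Γ.Adj] (d : ℕ) (χ : V → ℤ) (v : V) (l₁ l₂ : List V) (u : V) :
    sandConf Γ d χ v (l₁ ++ l₂) u = sandConf Γ d χ v l₁ u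
      + ((l₂.countP fun w => decide (Γ.Adj w u) : ℕ) : ℤ) - (d : ℤ) * (l₂.count u : ℤ) := by
  unfold sandConf
  rw [List.countP_append, List.count_append]
  push_cast
  ring

lemma sandConf_middle {V : Type*} [DecidableEq V] (Γ : SimpleGraph V)
    [DecidableRel Γ.Adj] (d : ℕ) (χ : V → ℤ) (v : V) (a s : List V) (x u : V)
    (hadj : ¬ Γ.Adj x u) (hne : x ≠ u) :
    sandConf Γ d χ v (a ++ x :: s) u = sandConf Γ d χ v (a ++ s) u := by
  have h : (a ++ x :: s).Perm ((a ++ s) ++ [x]) := by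
    have h1 : (a ++ x :: s).Perm (x :: (a ++ s)) := List.perm_middle
    exact h1.trans (List.perm_append_comm (l₁ := [x]) (l₂ := a ++ s))
  rw [sandConf_perm Γ d χ v h, sandConf_append]
  simp [hadj, hne, hne.symm, List.count_singleton]

theorem stmt_9 {V : Type*} [DecidableEq V] [Fintype V]
    (Γ : SimpleGraph V) [DecidableRel Γ.Adj] (d : ℕ)
    (χ : V → ℤ) (hstable : IsStableConf d Set.univ χ)
    (o : V) (hχo : χ o = (d : ℤ))
    (l : List V) (hl : IsTopplingSeq Γ d Set.univ χ o l) (hnd : l.Nodup)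
    (i j : Fin l.length) (hij : i < j)
    (hnadj : ∀ m : Fin l.length, i ≤ m → m < j → ¬ Γ.Adj (l.get j) (l.get m)) :
    IsTopplingSeq Γ d Set.univ χ o
      (l.take i ++ [l.get j] ++ (l.drop i).take (j - i) ++ l.drop (j + 1)) := by
  obtain ⟨-, h2, h3⟩ := hl
  have h2' : ∀ n (hn : n < l.length), (d : ℤ) < sandConf Γ d χ o (l.take n) l[n] := by
    intro n hn; simpa using h2 ⟨n, hn⟩
  have hij' : (i : ℕ) < (j : ℕ) := hij
  have hjl : (j : ℕ) < l.length := j.isLt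
  set ii := (i : ℕ) with hiidef
  set jj := (j : ℕ) with hjjdef
  set a := l.take ii with ha
  set x := l.get j with hx
  set b := (l.drop ii).take (jj - ii) with hb
  set c := l.drop (jj + 1) with hc
  have hxe : x = l[jj] := by rw [hx, List.get_eq_getElem]
  have hal : a.length = ii := by rw [ha, List.length_take]; omega
  have hbl : b.length = jj - ii := by
    rw [hb, List.length_take, List.length_drop]; omega
  have hbget : ∀ t (ht : t < jj - ii), b[t]'(by omega) = l[ii + t]'(by omega) := by
    intro t ht
    simp only [hb, List.getElem_take, List.getElem_drop]
  have hdec : l = a ++ (b ++ x :: c) := by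
    have hd1 : l.drop ii = b ++ l.drop jj := by
      conv_lhs => rw [← List.take_append_drop (jj - ii) (l.drop ii)]
      rw [List.drop_drop, hb]
      congr 2
      omega
    have hd2 : l.drop jj = x :: c := by
      rw [hc, hxe, ← List.drop_eq_getElem_cons hjl]
    conv_lhs => rw [← List.take_append_drop ii l, hd1, hd2]
  have hbmem : ∀ w ∈ b, ¬ Γ.Adj w x ∧ w ≠ x := by
    intro w hw
    obtain ⟨t, ht, rfl⟩ := List.getElem_of_mem hw
    rw [hbl] at ht
    rw [hbget t ht]
    constructor
    · intro hadj
      refine hnadj ⟨ii + t, by omega⟩ ?_ ?_ ?_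
      · rw [Fin.le_def]; exact Nat.le_add_right ii t
      · rw [Fin.lt_def]; show ii + t < jj; omega
      · rw [hx] at hadj
        exact hadj.symm
    · intro heq
      rw [hxe] at heq
      have := (hnd.getElem_inj_iff).mp heq
      omega
  have hbP : b.countP (fun w => decide (Γ.Adj w x)) = 0 :=
    List.countP_eq_zero.mpr (fun w hw => by simpa using (hbmem w hw).1)
  have hbc : b.count x = 0 := by
    rw [List.count_eq_zero]
    intro hx'
    exact (hbmem x hx').2 rfl
  have E1 : sandConf Γ d χ o (a ++ b) x = sandConf Γ d χ o a x := by
    rw [sandConf_append]; simp [hbP, hbc]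
  have htake_j : l.take jj = a ++ b := by
    conv_lhs => rw [hdec]
    rw [List.take_append,
      List.take_of_length_le (show a.length ≤ jj by omega),
      List.take_append,
      List.take_of_length_le (show b.length ≤ jj - a.length by omega)]
    simp [show jj - a.length - b.length = 0 by omega]
  have htake_mid : ∀ t, t ≤ jj - ii → l.take (ii + t) = a ++ b.take t := by
    intro t ht
    conv_lhs => rw [hdec]
    rw [List.take_append,
      List.take_of_length_le (show a.length ≤ ii + t by omega),
      List.take_append,
      show ii + t - a.length - b.length = 0 by omega,
      show ii + t - a.length = t by omega]
    simp
  have htake_big : ∀ n, jj < n → l.take n = a ++ (b ++ x :: c.take (n - jj - 1)) := by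
    intro n hn
    conv_lhs => rw [hdec]
    rw [List.take_append,
      List.take_of_length_le (show a.length ≤ n by omega),
      List.take_append,
      List.take_of_length_le (show b.length ≤ n - a.length by omega),
      show n - a.length - b.length = (n - jj - 1) + 1 by omega,
      List.take_succ_cons]
  have hG : a ++ [x] ++ b ++ c = a ++ x :: (b ++ c) := by
    simp [List.append_assoc]
  rw [hG]
  have hLlen : (a ++ x :: (b ++ c)).length = l.length := by
    conv_rhs => rw [hdec]
    simp only [List.length_append, List.length_cons]
    omega
  have hperm : (a ++ x :: (b ++ c)).Perm l := by
    conv_rhs => rw [hdec]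
    exact List.Perm.append_left a List.perm_middle.symm
  refine ⟨fun y _ => trivial, ?_, fun u _ => ?_⟩
  · rintro ⟨n, hn⟩
    simp only [List.get_eq_getElem]
    rw [hLlen] at hn
    have hnl : n < (a ++ x :: (b ++ c)).length := by omega
    rcases lt_trichotomy n ii with h | h | h
    · have e1 : (a ++ x :: (b ++ c)).take n = l.take n := by
        rw [List.take_append]
        simp only [show n - a.length = 0 by omega, List.take_zero, List.append_nil]
        rw [ha, List.take_take, min_eq_left (le_of_lt h)]
      have e2 : (a ++ x :: (b ++ c))[n] = l[n]'(by omega) := by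
        rw [List.getElem_append_left (by omega)]
        simp only [ha, List.getElem_take]
      rw [e1, e2]
      exact h2' n (by omega)
    · have e1 : (a ++ x :: (b ++ c)).take n = a := by
        subst h
        rw [← hal]
        exact List.take_left
      have e2 : (a ++ x :: (b ++ c))[n] = x := by
        rw [List.getElem_append_right (by omega)]
        simp [show n - a.length = 0 by omega]
      rw [e1, e2, ← E1, ← htake_j, hxe]
      exact h2' jj hjl
    · rcases le_or_gt n jj with h' | h'
      · -- ii < n ≤ jj
        set t := n - ii - 1 with htdef
        have ht : t < jj - ii := by omega
        have e1 : (a ++ x :: (b ++ c)).take n = a ++ x :: b.take t := by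
          rw [List.take_append,
            List.take_of_length_le (show a.length ≤ n by omega),
            show n - a.length = t + 1 by omega, List.take_succ_cons,
            List.take_append, show t - b.length = 0 by omega]
          simp
        have e2 : (a ++ x :: (b ++ c))[n] = l[ii + t]'(by omega) := by
          rw [List.getElem_append_right (by omega)]
          have h1 : n - a.length = t + 1 := by omega
          simp only [h1, List.getElem_cons_succ]
          rw [List.getElem_append_left (by omega)]
          exact hbget t ht
        have hm : ¬ Γ.Adj x (l[ii + t]'(by omega)) := by
          have := hnadj ⟨ii + t, by omega⟩ (by rw [Fin.le_def]; exact Nat.le_add_right ii t)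
            (by rw [Fin.lt_def]; show ii + t < jj; omega)
          simpa [List.get_eq_getElem] using this
        have hne : x ≠ l[ii + t]'(by omega) := by
          intro heq
          have := (hnd.getElem_inj_iff).mp (hxe.symm.trans heq)
          omega
        have key := h2' (ii + t) (by omega)
        rw [htake_mid t (by omega)] at key
        rw [e1, e2, sandConf_middle Γ d χ o a (b.take t) x _ hm hne]
        exact key
      · -- jj < n
        have e2 : (a ++ x :: (b ++ c))[n] = l[n]'(by omega) := by
          rw [List.getElem_append_right (by omega)]
          have h1 : n - a.length = (n - ii - 1) + 1 := by omega
          simp only [h1, List.getElem_cons_succ]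
          rw [List.getElem_append_right (by omega)]
          simp only [hc, List.getElem_drop]
          congr 1
          omega
        have e1 : ((a ++ x :: (b ++ c)).take n).Perm (l.take n) := by
          have c1 : (a ++ x :: (b ++ c)).take n = a ++ x :: (b ++ c.take (n - jj - 1)) := by
            rw [List.take_append,
              List.take_of_length_le (show a.length ≤ n by omega),
              show n - a.length = (n - ii - 1) + 1 by omega, List.take_succ_cons,
              List.take_append,
              List.take_of_length_le (show b.length ≤ n - ii - 1 by omega),
              show n - ii - 1 - b.length = n - jj - 1 by omega]
          rw [c1, htake_big n h']
          exact List.Perm.append_left a List.perm_middle.symm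
        rw [e2, sandConf_perm Γ d χ o e1]
        exact h2' n (by omega)
  · rw [sandConf_perm Γ d χ o hperm u]
    exact h3 u trivial
end

section
/- Let G be a finite tree rooted at o, viewed as a subgraph of an infinite connected d-regular graph, and let χ be a stable sandpile configuration with χ(o) = d. Organize a toppling sequence for the avalanche caused by adding a grain at o into waves, toppling o only when it is the only vertex with more than d grains. Then every vertex other than o that topples in the avalanche topples already in the first wave. -/
open SimpleGraph

set_option linter.unusedSectionVars false
set_option maxHeartbeats 1000000

section TREE

variable {V : Type*} [DecidableEq V]

/-- Parent of `v` towards root `o`: a neighbor strictly closer to `o`. -/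
noncomputable def par (Γ : SimpleGraph V) (o v : V) : V :=
  @Classical.epsilon V ⟨v⟩ fun p => Γ.Adj v p ∧ Γ.dist o p + 1 = Γ.dist o v

lemma par_exists {Γ : SimpleGraph V} (htree : Γ.IsTree) (o : V) {v : V} (hv : v ≠ o) :
    ∃ p, Γ.Adj v p ∧ Γ.dist o p + 1 = Γ.dist o v := by
  have hconn := htree.isConnected
  have hd : Γ.dist v o ≠ 0 := by
    rw [dist_ne_zero_iff_ne_and_reachable]
    exact ⟨hv, hconn v o⟩
  obtain ⟨P, hP⟩ := exists_walk_of_dist_ne_zero hd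
  cases P with
  | nil => exact absurd rfl hv
  | @cons _ p _ h q =>
    refine ⟨p, h, ?_⟩
    have l1 : q.length + 1 = Γ.dist v o := by simpa using hP
    have h2 : Γ.dist o p ≤ q.length := by rw [dist_comm]; exact dist_le q
    have h3 : Γ.dist o v ≤ Γ.dist o p + 1 := by
      have ht := hconn.dist_triangle (u := o) (v := p) (w := v)
      have : Γ.dist p v = 1 := dist_eq_one_iff_adj.mpr h.symm
      omega
    have h4 : Γ.dist o v = Γ.dist v o := dist_comm ..
    have h5 : Γ.dist o v ≤ q.length + 1 := le_trans h3 (by omega)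
    -- also dist o v ≥ q.length + 1? No: we need dist o p + 1 = dist o v.
    -- dist o v = dist v o = q.length+1 ≥ dist o p + 1 ≥ dist o v
    omega

lemma par_unique {Γ : SimpleGraph V} (htree : Γ.IsTree) (o : V) {v p₁ p₂ : V}
    (h₁ : Γ.Adj v p₁) (hd₁ : Γ.dist o p₁ + 1 = Γ.dist o v)
    (h₂ : Γ.Adj v p₂) (hd₂ : Γ.dist o p₂ + 1 = Γ.dist o v) : p₁ = p₂ := by
  have hconn := htree.isConnected
  obtain ⟨P₁, hl₁⟩ := hconn.exists_walk_length_eq_dist o p₁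
  obtain ⟨P₂, hl₂⟩ := hconn.exists_walk_length_eq_dist o p₂
  have hQ₁ : (P₁.concat h₁.symm).IsPath := by
    apply Walk.isPath_of_length_eq_dist
    rw [Walk.length_concat, hl₁, hd₁]
  have hQ₂ : (P₂.concat h₂.symm).IsPath := by
    apply Walk.isPath_of_length_eq_dist
    rw [Walk.length_concat, hl₂, hd₂]
  have := (htree.existsUnique_path o v).unique hQ₁ hQ₂
  obtain ⟨hv, -⟩ := Walk.concat_inj this
  exact hv

lemma dist_ne_of_adj {Γ : SimpleGraph V} (htree : Γ.IsTree) (o : V) {x v : V}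
    (hadj : Γ.Adj x v) : Γ.dist o x ≠ Γ.dist o v := by
  intro heq
  have hconn := htree.isConnected
  by_cases hxo : x = o
  · subst hxo
    have h0 : Γ.dist x v ≠ 0 := by
      rw [dist_ne_zero_iff_ne_and_reachable]; exact ⟨hadj.ne, hconn x v⟩
    rw [dist_self] at heq; omega
  · -- x ≠ o; build two distinct paths o → v
    obtain ⟨Px, hPx, hlx⟩ := hconn.exists_path_of_dist o x
    obtain ⟨Pv, hPv, hlv⟩ := hconn.exists_path_of_dist o v
    have hvx : v ≠ x := hadj.ne'
    have hvsup : v ∉ Px.support := by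
      intro hmem
      have hsplit := congr_arg Walk.length (Px.take_spec hmem)
      rw [Walk.length_append] at hsplit
      have hd1 : Γ.dist o v ≤ (Px.takeUntil v hmem).length := dist_le _
      have hd2 : (Px.dropUntil v hmem).length ≠ 0 := by
        intro h0
        exact hvx (Walk.eq_of_length_eq_zero h0)
      have hne0 : Γ.dist o x ≠ 0 := by
        rw [dist_ne_zero_iff_ne_and_reachable]; exact ⟨Ne.symm hxo, hconn o x⟩
      omega
    have hQ : (Px.concat hadj).IsPath := by
      rw [← Walk.isPath_reverse_iff, Walk.reverse_concat]
      rw [Walk.cons_isPath_iff]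
      constructor
      · rwa [Walk.isPath_reverse_iff]
      · rw [Walk.support_reverse]; simpa using hvsup
    have := (htree.existsUnique_path o v).unique hQ hPv
    have hlen := congr_arg Walk.length this
    rw [Walk.length_concat] at hlen
    omega

lemma par_spec {Γ : SimpleGraph V} (htree : Γ.IsTree) (o : V) {v : V} (hv : v ≠ o) :
    Γ.Adj v (par Γ o v) ∧ Γ.dist o (par Γ o v) + 1 = Γ.dist o v :=
  Classical.epsilon_spec (par_exists htree o hv)

lemma adj_dist {Γ : SimpleGraph V} (htree : Γ.IsTree) (o : V) {x v : V} (hadj : Γ.Adj x v) :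
    Γ.dist o x + 1 = Γ.dist o v ∨ Γ.dist o v + 1 = Γ.dist o x := by
  have hconn := htree.isConnected
  have h1 : Γ.dist o v ≤ Γ.dist o x + 1 := by
    have := hconn.dist_triangle (u := o) (v := x) (w := v)
    have hd : Γ.dist x v = 1 := dist_eq_one_iff_adj.mpr hadj
    omega
  have h2 : Γ.dist o x ≤ Γ.dist o v + 1 := by
    have := hconn.dist_triangle (u := o) (v := v) (w := x)
    have hd : Γ.dist v x = 1 := dist_eq_one_iff_adj.mpr hadj.symm
    omega
  have h3 := dist_ne_of_adj htree o hadj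
  omega

lemma child_par {Γ : SimpleGraph V} (htree : Γ.IsTree) (o : V) {u c : V} (hu : u ≠ o)
    (hc : Γ.Adj u c) (hne : c ≠ par Γ o u) : c ≠ o ∧ par Γ o c = u := by
  rcases adj_dist htree o hc.symm with h | h
  · exact absurd (par_unique htree o hc h (par_spec htree o hu).1 (par_spec htree o hu).2) hne
  · have hco : c ≠ o := by
      intro h0
      rw [h0, dist_self] at h
      omega
    exact ⟨hco, par_unique htree o (par_spec htree o hco).1 (par_spec htree o hco).2 hc.symm h⟩
end TREE
section CNT

variable {V : Type*} [DecidableEq V]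

/-- Number of occurrences of `v` among the first `t` entries of `l`, as an integer. -/
def cnt (l : List V) (v : V) (t : ℕ) : ℤ := ((l.take t).count v : ℤ)

lemma cnt_zero (l : List V) (v : V) : cnt l v 0 = 0 := by simp [cnt]

lemma cnt_nonneg (l : List V) (v : V) (t : ℕ) : 0 ≤ cnt l v t := by
  simp [cnt]

lemma cnt_mono (l : List V) (v : V) {s t : ℕ} (h : s ≤ t) : cnt l v s ≤ cnt l v t := by
  unfold cnt
  have : l.take s = (l.take t).take s := by rw [List.take_take, Nat.min_eq_left h]
  rw [this]
  exact_mod_cast ((l.take t).take_sublist s).count_le v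

lemma cnt_succ (l : List V) (v : V) (t : ℕ) (ht : t < l.length) :
    cnt l v (t + 1) = cnt l v t + if l.get ⟨t, ht⟩ = v then 1 else 0 := by
  unfold cnt
  rw [List.take_succ]
  have : l[t]? = some (l.get ⟨t, ht⟩) := by
    rw [List.getElem?_eq_getElem ht]; rfl
  rw [this]
  simp only [Option.toList_some, List.count_append, List.count_singleton']
  push_cast
  by_cases h : l.get ⟨t, ht⟩ = v <;> simp [h]

lemma cnt_succ_eq (l : List V) (v : V) (t : ℕ) (ht : t < l.length) (h : l.get ⟨t, ht⟩ = v) :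
    cnt l v (t + 1) = cnt l v t + 1 := by rw [cnt_succ l v t ht, if_pos h]

lemma cnt_succ_ne (l : List V) (v : V) (t : ℕ) (ht : t < l.length) (h : l.get ⟨t, ht⟩ ≠ v) :
    cnt l v (t + 1) = cnt l v t := by rw [cnt_succ l v t ht, if_neg h]; ring

/-- Extraction of the `(m+1)`-st occurrence of `v` in `l`. -/
lemma exists_idx (l : List V) (v : V) :
    ∀ b : ℕ, b ≤ l.length → ∀ m : ℕ, (m : ℤ) < cnt l v b →
      ∃ idx : Fin l.length, idx.1 < b ∧ l.get idx = v ∧ cnt l v idx.1 = m := by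
  intro b
  induction b with
  | zero => intro _ m hm; rw [cnt_zero] at hm; omega
  | succ b ih =>
    intro hb m hm
    have hbl : b < l.length := hb
    by_cases h : (m : ℤ) < cnt l v b
    · obtain ⟨idx, h1, h2, h3⟩ := ih hbl.le m h
      exact ⟨idx, by omega, h2, h3⟩
    · push_neg at h
      rw [cnt_succ l v b hbl] at hm
      by_cases hv : l.get ⟨b, hbl⟩ = v
      · rw [if_pos hv] at hm
        have hcb : cnt l v b = (m : ℤ) := by omega
        exact ⟨⟨b, hbl⟩, Nat.lt_succ_self b, hv, hcb⟩
      · rw [if_neg hv] at hm; omega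

/-- If `v` occurs at position `idx` and the count of `v` strictly before `idx` is at most the
count strictly before `j`, then `j ≤ idx`. -/
lemma le_idx_of_cnt_le (l : List V) (v : V) (idx : Fin l.length) (hv : l.get idx = v)
    (j : ℕ) (h : cnt l v j ≤ cnt l v idx.1) : j ≤ idx.1 := by
  by_contra hlt
  push_neg at hlt
  have h1 : cnt l v (idx.1 + 1) ≤ cnt l v j := by
    apply cnt_mono; omega
  rw [cnt_succ_eq l v idx.1 idx.2 hv] at h1
  omega

lemma countP_adj (Γ : SimpleGraph V) [DecidableRel Γ.Adj] [Fintype V] (L : List V) (u : V) :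
    ((L.countP fun w => decide (Γ.Adj w u) : ℕ) : ℤ)
      = ∑ x ∈ Γ.neighborFinset u, (L.count x : ℤ) := by
  induction L with
  | nil => simp
  | cons a L ih =>
    rw [List.countP_cons]
    have hrhs : ∀ x, ((a :: L).count x : ℤ) = (L.count x : ℤ) + if x = a then 1 else 0 := by
      intro x
      by_cases h : x = a
      · subst h; rw [List.count_cons_self]; push_cast; rw [if_pos rfl]
      · rw [List.count_cons_of_ne (Ne.symm h), if_neg h]; push_cast; ring
    simp only [hrhs]
    rw [Finset.sum_add_distrib]
    push_cast
    rw [ih]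
    congr 1
    rw [Finset.sum_ite_eq' (Γ.neighborFinset u) a (fun _ => (1 : ℤ))]
    by_cases h : Γ.Adj a u <;> simp [mem_neighborFinset, Γ.adj_comm u a, h]
end CNT

section DYN
variable {V : Type*} [DecidableEq V] [Fintype V] {Γ : SimpleGraph V} [DecidableRel Γ.Adj]
  (htree : Γ.IsTree) {d : ℕ} (hdeg : ∀ u : V, Γ.degree u ≤ d) {χ : V → ℤ} (o : V) {l : List V}
  (H1 : ∀ i : Fin l.length, (d : ℤ) < sandConf Γ d χ o (l.take i) (l.get i))

lemma sand_eq (t : ℕ) (u : V) :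
    sandConf Γ d χ o (l.take t) u
      = χ u + (if u = o then 1 else 0) + (∑ x ∈ Γ.neighborFinset u, cnt l x t)
        - (d : ℤ) * cnt l u t := by
  unfold sandConf cnt
  rw [countP_adj]

include htree hdeg H1 in
lemma fireStep (a : ℕ)
    (hstab : ∀ v, v ≠ o → sandConf Γ d χ o (l.take a) v ≤ d)
    (t : Fin l.length) (hat : a ≤ t.1) (hto : l.get t ≠ o)
    (hch : ∀ c ∈ Γ.neighborFinset (l.get t), c ≠ par Γ o (l.get t) →
      cnt l c t.1 - cnt l c a ≤ cnt l (l.get t) t.1 - cnt l (l.get t) a) :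
    cnt l (l.get t) t.1 - cnt l (l.get t) a + 1
      ≤ cnt l (par Γ o (l.get t)) t.1 - cnt l (par Γ o (l.get t)) a := by
  obtain ⟨hadj, -⟩ := par_spec htree o hto
  have hpmem : par Γ o (l.get t) ∈ Γ.neighborFinset (l.get t) :=
    (mem_neighborFinset _ _ _).mpr hadj
  have h1 := H1 t
  have h0 := hstab (l.get t) hto
  rw [sand_eq, if_neg hto] at h1 h0
  have hnet : 0 < (∑ x ∈ Γ.neighborFinset (l.get t), (cnt l x t.1 - cnt l x a))
      - (d : ℤ) * (cnt l (l.get t) t.1 - cnt l (l.get t) a) := by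
    rw [Finset.sum_sub_distrib]
    have hd : (0:ℤ) ≤ d := by positivity
    nlinarith [h1, h0]
  have hsplit : ∑ x ∈ (Γ.neighborFinset (l.get t)).erase (par Γ o (l.get t)),
      (cnt l x t.1 - cnt l x a)
      + (cnt l (par Γ o (l.get t)) t.1 - cnt l (par Γ o (l.get t)) a)
      = ∑ x ∈ Γ.neighborFinset (l.get t), (cnt l x t.1 - cnt l x a) :=
    Finset.sum_erase_add _ _ hpmem
  have hΔu : 0 ≤ cnt l (l.get t) t.1 - cnt l (l.get t) a := by
    have := cnt_mono l (l.get t) hat; linarith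
  have hcard : ((Γ.neighborFinset (l.get t)).erase (par Γ o (l.get t))).card + 1
      = Γ.degree (l.get t) := by
    rw [Finset.card_erase_add_one hpmem, card_neighborFinset_eq_degree]
  have hbound : ∑ x ∈ (Γ.neighborFinset (l.get t)).erase (par Γ o (l.get t)),
      (cnt l x t.1 - cnt l x a)
      ≤ ((((Γ.neighborFinset (l.get t)).erase (par Γ o (l.get t))).card : ℕ) : ℤ)
        * (cnt l (l.get t) t.1 - cnt l (l.get t) a) := by
    have := Finset.sum_le_card_nsmul ((Γ.neighborFinset (l.get t)).erase (par Γ o (l.get t)))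
      (fun x => cnt l x t.1 - cnt l x a) (cnt l (l.get t) t.1 - cnt l (l.get t) a)
      (fun x hx => hch x (Finset.mem_of_mem_erase hx) (Finset.ne_of_mem_erase hx))
    simpa [nsmul_eq_mul] using this
  have hcd : ((((Γ.neighborFinset (l.get t)).erase (par Γ o (l.get t))).card : ℕ) : ℤ)
      ≤ (d : ℤ) - 1 := by
    have h2 := hdeg (l.get t)
    have h3 : ((Γ.neighborFinset (l.get t)).erase (par Γ o (l.get t))).card + 1 ≤ d := by omega
    push_cast
    omega
  have hmul := mul_le_mul_of_nonneg_right hcd hΔu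
  linarith [hsplit, hbound, hnet, hmul]

include htree hdeg H1 in
lemma waveInv (a : ℕ)
    (hstab : ∀ v, v ≠ o → sandConf Γ d χ o (l.take a) v ≤ d) :
    ∀ t, a ≤ t → t ≤ l.length → ∀ v, v ≠ o →
      cnt l v t - cnt l v a ≤ cnt l (par Γ o v) t - cnt l (par Γ o v) a := by
  intro t
  induction t with
  | zero =>
    intro h0 _ v _
    have ha : a = 0 := Nat.le_zero.mp h0
    subst ha
    simp
  | succ t ih =>
    intro hat hlen v hv
    rcases Nat.lt_or_ge t a with hlt | hge
    · have ha : a = t + 1 := by omega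
      rw [ha]
      simp
    · have ht : t < l.length := by omega
      have hgl : t ≤ l.length := by omega
      by_cases huv : l.get ⟨t, ht⟩ = v
      · have hto : l.get ⟨t, ht⟩ ≠ o := by rw [huv]; exact hv
        have hch : ∀ c ∈ Γ.neighborFinset (l.get ⟨t, ht⟩), c ≠ par Γ o (l.get ⟨t, ht⟩) →
            cnt l c t - cnt l c a ≤ cnt l (l.get ⟨t, ht⟩) t - cnt l (l.get ⟨t, ht⟩) a := by
          intro c hc hcp
          have hadjc : Γ.Adj (l.get ⟨t, ht⟩) c := (mem_neighborFinset _ _ _).mp hc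
          obtain ⟨hco, hcpar⟩ := child_par htree o hto hadjc hcp
          have hthis := ih hge hgl c hco
          rw [hcpar] at hthis
          exact hthis
        have hstep := fireStep htree hdeg o H1 a hstab ⟨t, ht⟩ hge hto hch
        rw [huv] at hstep
        have hpv : l.get ⟨t, ht⟩ ≠ par Γ o v := by
          rw [huv]; exact (par_spec htree o hv).1.ne
        rw [cnt_succ_eq l v t ht huv, cnt_succ_ne l (par Γ o v) t ht hpv]
        linarith
      · rw [cnt_succ_ne l v t ht huv]
        have hmono := cnt_mono l (par Γ o v) (Nat.le_succ t)
        have := ih hge hgl v hv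
        linarith

include htree hdeg H1 in
lemma chainO (a : ℕ)
    (hstab : ∀ v, v ≠ o → sandConf Γ d χ o (l.take a) v ≤ d)
    (t : ℕ) (hat : a ≤ t) (hlen : t ≤ l.length) :
    ∀ v, cnt l v t - cnt l v a ≤ cnt l o t - cnt l o a := by
  suffices H : ∀ n, ∀ v, Γ.dist o v ≤ n → cnt l v t - cnt l v a ≤ cnt l o t - cnt l o a by
    intro v; exact H (Γ.dist o v) v le_rfl
  intro n
  induction n with
  | zero =>
    intro v hd
    have hv : v = o := by
      by_contra hv
      have : Γ.dist o v ≠ 0 := by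
        rw [dist_ne_zero_iff_ne_and_reachable]
        exact ⟨Ne.symm hv, htree.isConnected o v⟩
      omega
    rw [hv]
  | succ n ih =>
    intro v hd
    by_cases hv : v = o
    · rw [hv]
    · have h1 := waveInv htree hdeg o H1 a hstab t hat hlen v hv
      have hdp := (par_spec htree o hv).2
      have h2 := ih (par Γ o v) (by omega)
      linarith

include htree hdeg H1 in
lemma oForce (hχo : χ o = (d : ℤ))
    (hstab0 : ∀ v, v ≠ o → sandConf Γ d χ o (l.take 0) v ≤ d)
    (j : Fin l.length) (hj : l.get j = o) (hK : 1 ≤ cnt l o j.1) :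
    ∀ x ∈ Γ.neighborFinset o, cnt l x j.1 = cnt l o j.1 := by
  by_contra hcon
  push_neg at hcon
  obtain ⟨x₀, hx₀m, hx₀⟩ := hcon
  have hle : ∀ x ∈ Γ.neighborFinset o, cnt l x j.1 ≤ cnt l o j.1 := by
    intro x _
    have := chainO htree hdeg o H1 0 hstab0 j.1 (Nat.zero_le _) j.2.le x
    simpa [cnt_zero] using this
  have hlt : cnt l x₀ j.1 < cnt l o j.1 := lt_of_le_of_ne (hle x₀ hx₀m) hx₀
  have h1 := H1 j
  rw [hj, sand_eq, if_pos rfl, hχo] at h1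
  have hsum : (d : ℤ) * cnt l o j.1 ≤ ∑ x ∈ Γ.neighborFinset o, cnt l x j.1 := by linarith
  have hub : ∑ x ∈ Γ.neighborFinset o, cnt l x j.1
      < ∑ _x ∈ Γ.neighborFinset o, cnt l o j.1 :=
    Finset.sum_lt_sum hle ⟨x₀, hx₀m, hlt⟩
  rw [Finset.sum_const, nsmul_eq_mul] at hub
  have hcd : (Γ.neighborFinset o).card ≤ d := by
    rw [card_neighborFinset_eq_degree]; exact hdeg o
  have hmul : (((Γ.neighborFinset o).card : ℕ) : ℤ) * cnt l o j.1 ≤ (d : ℤ) * cnt l o j.1 :=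
    mul_le_mul_of_nonneg_right (by exact_mod_cast hcd) (by linarith)
  linarith

end DYN

/-- On a finite tree (a subgraph of an infinite `d`-regular graph, so every degree
is at most `d`), in a toppling sequence organized into waves (the origin `o` is
toppled only when it is the only unstable vertex), every vertex other than `o`
that topples already topples in the first wave, i.e. before the second toppling
of `o`. -/
theorem stmt_10 {V : Type*} [DecidableEq V] [Fintype V]
    (Γ : SimpleGraph V) [DecidableRel Γ.Adj] (htree : Γ.IsTree)
    (d : ℕ) (hdeg : ∀ u : V, Γ.degree u ≤ d)
    (χ : V → ℤ) (hstable : IsStableConf d Set.univ χ)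
    (o : V) (hχo : χ o = (d : ℤ))
    (l : List V) (hl : IsTopplingSeq Γ d Set.univ χ o l)
    (hwaves : ∀ i : Fin l.length, l.get i = o →
      ∀ u : V, (d : ℤ) < sandConf Γ d χ o (l.take i) u → u = o)
    (w : V) (hw : w ≠ o) (hwl : w ∈ l) :
    ∃ i : Fin l.length, l.get i = w ∧ (l.take i).count o ≤ 1 := by
  classical
  obtain ⟨-, H1, -⟩ := hl
  -- stability of the initial configuration away from o
  have hstab0 : ∀ v, v ≠ o → sandConf Γ d χ o (l.take 0) v ≤ d := by
    intro v hv
    rw [sand_eq, if_neg hv]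
    simp only [cnt_zero, Finset.sum_const_zero, mul_zero]
    have := (hstable v trivial).2
    linarith
  -- stability just before each toppling of o
  have hstabAt : ∀ j : Fin l.length, l.get j = o →
      ∀ v, v ≠ o → sandConf Γ d χ o (l.take j.1) v ≤ d := by
    intro j hj v hv
    by_contra hlt
    exact hv (hwaves j hj v (not_le.mp hlt))
  -- the first occurrence of w
  have hw1 : ((0 : ℕ) : ℤ) < cnt l w l.length := by
    unfold cnt
    rw [List.take_length]
    exact_mod_cast List.count_pos_iff.mpr hwl
  obtain ⟨i₀, -, hi₀w, hi₀c⟩ := exists_idx l w l.length le_rfl 0 hw1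
  refine ⟨i₀, hi₀w, ?_⟩
  by_contra hK2
  push_neg at hK2
  -- Kn = number of topplings of o before i₀, at least 2
  set Kn : ℕ := (l.take i₀.1).count o with hKn
  have hKc : cnt l o i₀.1 = (Kn : ℤ) := rfl
  have hK2' : 2 ≤ Kn := hK2
  -- j : position of the Kn-th toppling of o (count before it is Kn - 1)
  obtain ⟨j, hjlt, hjo, hjc⟩ := exists_idx l o i₀.1 i₀.2.le (Kn - 1)
    (by rw [hKc]; omega)
  -- jp : position of the (Kn-1)-st toppling of o
  obtain ⟨jp, hjplt, hjpo, hjpc⟩ := exists_idx l o j.1 j.2.le (Kn - 2)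
    (by rw [hjc]; omega)
  have stabj := hstabAt j hjo
  have stabjp := hstabAt jp hjpo
  -- predicate: fires in the window [j, i₀] but not in the previous wave [jp, j)
  set P : V → Prop := fun x => x ≠ o ∧ cnt l x j.1 < cnt l x (i₀.1 + 1)
    ∧ cnt l x j.1 = cnt l x jp.1 with hP
  have hPw : P w := by
    refine ⟨hw, ?_, ?_⟩
    · have h1 : cnt l w j.1 ≤ cnt l w i₀.1 := cnt_mono l w hjlt.le
      have h2 : cnt l w (i₀.1 + 1) = cnt l w i₀.1 + 1 := cnt_succ_eq l w i₀.1 i₀.2 hi₀w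
      omega
    · have h1 : cnt l w jp.1 ≤ cnt l w j.1 := cnt_mono l w hjplt.le
      have h2 : cnt l w j.1 ≤ cnt l w i₀.1 := cnt_mono l w hjlt.le
      have h3 := cnt_nonneg l w jp.1
      omega
  -- choose a minimal-depth vertex satisfying P
  obtain ⟨u, huF, humin⟩ := Finset.exists_min_image
    (Finset.univ.filter fun x => P x) (fun x => Γ.dist o x)
    ⟨w, Finset.mem_filter.mpr ⟨Finset.mem_univ w, hPw⟩⟩
  obtain ⟨-, huo, hufire, huprev⟩ :
      u ∈ Finset.univ ∧ u ≠ o ∧ cnt l u j.1 < cnt l u (i₀.1 + 1)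
        ∧ cnt l u j.1 = cnt l u jp.1 := by
    have := Finset.mem_filter.mp huF
    exact ⟨this.1, this.2.1, this.2.2.1, this.2.2.2⟩
  -- u's first firing in the window [j, i₀]
  obtain ⟨tu, htub, htuu, htuc⟩ := exists_idx l u (i₀.1 + 1)
    (by omega : i₀.1 + 1 ≤ l.length) ((l.take j.1).count u)
    (by exact_mod_cast hufire)
  have htucj : cnt l u tu.1 = cnt l u j.1 := htuc
  have hjtu : j.1 < tu.1 := by
    have hle : j.1 ≤ tu.1 := le_idx_of_cnt_le l u tu htuu j.1 (le_of_eq htucj.symm)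
    rcases Nat.lt_or_ge j.1 tu.1 with h | h
    · exact h
    · exfalso
      have : j.1 = tu.1 := by omega
      have : l.get j = l.get tu := by
        congr 1
        exact Fin.ext this
      rw [hjo, htuu] at this
      exact huo this.symm
  -- fireStep at tu with base j : the parent of u fires in (j, tu)
  set p := par Γ o u with hp
  have hch : ∀ c ∈ Γ.neighborFinset (l.get tu), c ≠ par Γ o (l.get tu) →
      cnt l c tu.1 - cnt l c j.1 ≤ cnt l (l.get tu) tu.1 - cnt l (l.get tu) j.1 := by
    intro c hc hcp
    have hadjc : Γ.Adj (l.get tu) c := (mem_neighborFinset _ _ _).mp hc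
    obtain ⟨hco, hcpar⟩ := child_par htree o (by rw [htuu]; exact huo) hadjc hcp
    have hthis := waveInv htree hdeg o H1 j.1 stabj tu.1 hjtu.le tu.2.le c hco
    rw [hcpar] at hthis
    exact hthis
  have hfs := fireStep htree hdeg o H1 j.1 stabj tu hjtu.le (by rw [htuu]; exact huo) hch
  rw [htuu] at hfs
  rw [htucj] at hfs
  -- so cnt p tu - cnt p j ≥ 1
  have hpfire : cnt l p j.1 + 1 ≤ cnt l p tu.1 := by rw [hp]; linarith
  by_cases hpo : p = o
  · -- parent is the root: contradiction via oForce
    have hadj : Γ.Adj o u := by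
      have := (par_spec htree o huo).1
      rw [← hp] at this
      rw [← hpo]
      exact this.symm
    have hforce := oForce htree hdeg o H1 hχo hstab0 j hjo
      (by rw [hjc]; omega) u ((mem_neighborFinset _ _ _).mpr hadj)
    have hchain := chainO htree hdeg o H1 0 hstab0 jp.1 (Nat.zero_le _) jp.2.le u
    simp only [cnt_zero, sub_zero] at hchain
    rw [hjc] at hforce
    rw [hjpc] at hchain
    omega
  · -- parent p ≠ o : find p's first firing in the window [j, tu)
    have hcntpj : cnt l p j.1 = (((l.take j.1).count p : ℕ) : ℤ) := rfl
    obtain ⟨s', hs'b, hs'p, hs'c⟩ := exists_idx l p tu.1 tu.2.le ((l.take j.1).count p)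
      (by rw [← hcntpj]; linarith)
    have hs'cj : cnt l p s'.1 = cnt l p j.1 := hs'c
    have hjs' : j.1 < s'.1 := by
      have hle : j.1 ≤ s'.1 := le_idx_of_cnt_le l p s' hs'p j.1 (le_of_eq hs'cj.symm)
      rcases Nat.lt_or_ge j.1 s'.1 with h | h
      · exact h
      · exfalso
        have heq : j.1 = s'.1 := by omega
        have : l.get j = l.get s' := by congr 1; exact Fin.ext heq
        rw [hjo, hs'p] at this
        exact hpo this.symm
    have hs'i₀ : s'.1 ≤ i₀.1 := by omega
    -- p fired in the previous wave [jp, j), exactly once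
    have hpprev1 : cnt l p j.1 - cnt l p jp.1 = 1 := by
      have hne : cnt l p j.1 ≠ cnt l p jp.1 := by
        intro heq
        have hPp : P p := by
          refine ⟨hpo, ?_, heq⟩
          have h1 : cnt l p (s'.1 + 1) = cnt l p s'.1 + 1 := cnt_succ_eq l p s'.1 s'.2 hs'p
          have h2 : cnt l p (s'.1 + 1) ≤ cnt l p (i₀.1 + 1) := cnt_mono l p (by omega)
          have h3 : cnt l p j.1 ≤ cnt l p s'.1 := cnt_mono l p hjs'.le
          omega
        have := humin p (Finset.mem_filter.mpr ⟨Finset.mem_univ p, hPp⟩)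
        have hdp := (par_spec htree o huo).2
        rw [← hp] at hdp
        omega
      have hge : cnt l p jp.1 ≤ cnt l p j.1 := cnt_mono l p hjplt.le
      have hub := chainO htree hdeg o H1 jp.1 stabjp j.1 hjplt.le j.2.le p
      rw [hjc, hjpc] at hub
      have : cnt l o j.1 - cnt l o jp.1 = 1 := by rw [hjc, hjpc]; push_cast; omega
      omega
    -- the contradiction at p's firing s', with base jp
    set g := par Γ o p with hg
    have hgspec := par_spec htree o hpo
    rw [← hg] at hgspec
    have huspec := par_spec htree o huo
    rw [← hp] at huspec
    have hgu : g ≠ u := by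
      intro heq
      have h1 := hgspec.2
      have h2 := huspec.2
      rw [heq] at h1
      omega
    have hgmem : g ∈ Γ.neighborFinset p := (mem_neighborFinset _ _ _).mpr hgspec.1
    have humem : u ∈ Γ.neighborFinset p := (mem_neighborFinset _ _ _).mpr huspec.1.symm
    -- lower bound on the sum of neighbor count increments over [jp, s']
    have h1 := H1 s'
    rw [hs'p, sand_eq, if_neg hpo] at h1
    have h0 := stabjp p hpo
    rw [sand_eq, if_neg hpo] at h0
    have hΔp : cnt l p s'.1 - cnt l p jp.1 = 1 := by omega
    have hsum : (d : ℤ) < ∑ x ∈ Γ.neighborFinset p, (cnt l x s'.1 - cnt l x jp.1) := by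
      rw [Finset.sum_sub_distrib]
      nlinarith [h1, h0, hΔp]
    -- upper bounds
    have hbg : cnt l g s'.1 - cnt l g jp.1 ≤ 2 := by
      have part1 := chainO htree hdeg o H1 jp.1 stabjp j.1 hjplt.le j.2.le g
      have part2 := chainO htree hdeg o H1 j.1 stabj s'.1 hjs'.le s'.2.le g
      have ho1 : cnt l o j.1 - cnt l o jp.1 = 1 := by rw [hjc, hjpc]; push_cast; omega
      have ho2 : cnt l o s'.1 - cnt l o j.1 ≤ 1 := by
        have := cnt_mono l o (hs'i₀ : s'.1 ≤ i₀.1)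
        rw [hjc, hKc] at *
        omega
      omega
    have hbu : cnt l u s'.1 - cnt l u jp.1 ≤ 0 := by
      have h1 : cnt l u s'.1 ≤ cnt l u tu.1 := cnt_mono l u hs'b.le
      omega
    have hbc : ∀ x ∈ (Γ.neighborFinset p).erase g |>.erase u,
        cnt l x s'.1 - cnt l x jp.1 ≤ 1 := by
      intro x hx
      have hxe := Finset.mem_of_mem_erase hx
      have hxu : x ≠ u := Finset.ne_of_mem_erase hx
      have hxg : x ≠ g := Finset.ne_of_mem_erase hxe
      have hxmem := Finset.mem_of_mem_erase hxe
      have hadjx : Γ.Adj p x := (mem_neighborFinset _ _ _).mp hxmem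
      obtain ⟨hxo, hxpar⟩ := child_par htree o hpo hadjx (by rw [← hg]; exact hxg)
      have part1 := chainO htree hdeg o H1 jp.1 stabjp j.1 hjplt.le j.2.le x
      have ho1 : cnt l o j.1 - cnt l o jp.1 = 1 := by rw [hjc, hjpc]; push_cast; omega
      have part2 := waveInv htree hdeg o H1 j.1 stabj s'.1 hjs'.le s'.2.le x hxo
      rw [hxpar] at part2
      rw [hs'cj] at part2
      omega
    -- assemble the sum bound
    have hsplit1 : ∑ x ∈ (Γ.neighborFinset p).erase g, (cnt l x s'.1 - cnt l x jp.1)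
        + (cnt l g s'.1 - cnt l g jp.1)
        = ∑ x ∈ Γ.neighborFinset p, (cnt l x s'.1 - cnt l x jp.1) :=
      Finset.sum_erase_add _ _ hgmem
    have humem' : u ∈ (Γ.neighborFinset p).erase g :=
      Finset.mem_erase.mpr ⟨Ne.symm hgu, humem⟩
    have hsplit2 : ∑ x ∈ ((Γ.neighborFinset p).erase g).erase u,
        (cnt l x s'.1 - cnt l x jp.1) + (cnt l u s'.1 - cnt l u jp.1)
        = ∑ x ∈ (Γ.neighborFinset p).erase g, (cnt l x s'.1 - cnt l x jp.1) :=
      Finset.sum_erase_add _ _ humem'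
    have hrest : ∑ x ∈ ((Γ.neighborFinset p).erase g).erase u,
        (cnt l x s'.1 - cnt l x jp.1)
        ≤ ((((Γ.neighborFinset p).erase g).erase u).card : ℤ) * 1 := by
      have := Finset.sum_le_card_nsmul (((Γ.neighborFinset p).erase g).erase u)
        (fun x => cnt l x s'.1 - cnt l x jp.1) 1 hbc
      simpa [nsmul_eq_mul] using this
    have hcard2 : (((Γ.neighborFinset p).erase g).erase u).card + 2 = Γ.degree p := by
      have e1 := Finset.card_erase_add_one humem'
      have e2 := Finset.card_erase_add_one hgmem
      have e3 : (Γ.neighborFinset p).card = Γ.degree p := Γ.card_neighborFinset_eq_degree p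
      omega
    have hdegp := hdeg p
    have hcardZ : ((((Γ.neighborFinset p).erase g).erase u).card : ℤ) ≤ (d : ℤ) - 2 := by
      push_cast
      omega
    linarith [hsum, hsplit1, hsplit2, hrest, hbg, hbu, hcardZ]
end

section
/- Let G be a decorated rooted subtree of the expanded cactus with origin o, χ a stable configuration with χ(o) = 3, and v_1, ..., v_k a toppling sequence for the avalanche caused by adding a grain at o. If S is a forbidden subconfiguration of χ, then no vertex v_i of the toppling sequence lies in S. -/
open SimpleGraph

lemma countP_adj_eq_sum {V : Type*} [DecidableEq V] [Fintype V] (Γ : SimpleGraph V)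
    [DecidableRel Γ.Adj] (u : V) (t : List V) :
    (t.countP fun w => decide (Γ.Adj w u)) = ∑ w ∈ Γ.neighborFinset u, t.count w := by
  induction t with
  | nil => simp
  | cons a t ih =>
    rw [List.countP_cons]
    have hcnt : ∀ w : V, List.count w (a :: t) = List.count w t + if a = w then 1 else 0 := by
      intro w; rw [List.count_cons]; simp [beq_iff_eq]
    simp only [hcnt, Finset.sum_add_distrib, ih]
    congr 1
    rw [Finset.sum_ite_eq]
    simp [SimpleGraph.mem_neighborFinset, SimpleGraph.adj_comm, decide_eq_true_eq]

lemma fsc_aux {V : Type*} [DecidableEq V] [Fintype V]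
    (Γ : SimpleGraph V) [DecidableRel Γ.Adj]
    (hdeg : ∀ u : V, Γ.degree u ≤ 3) (o : V) (ho : Γ.degree o < 3)
    (χ : V → ℤ) (hstable : ∀ u ∈ Set.univ, 1 ≤ χ u ∧ χ u ≤ (3:ℤ)) (hχo : χ o = 3)
    (l : List V)
    (hunst : ∀ i : Fin l.length, (3:ℤ) < χ (l.get i) + (if l.get i = o then 1 else 0)
      + (((l.take i).countP fun w => decide (Γ.Adj w (l.get i)) : ℕ) : ℤ)
      - 3 * ((l.take i).count (l.get i) : ℤ))
    (S : Finset V) (hS : S.Nonempty ∧ ∀ u ∈ S, χ u ≤ ((S.filter fun w => Γ.Adj u w).card : ℤ)) :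
    ∀ u ∈ l, u ∉ S := by
  have key : ∀ n (hn : n < l.length),
      (3:ℤ) < χ (l.get ⟨n, hn⟩) + (if l.get ⟨n, hn⟩ = o then 1 else 0)
        + (∑ w ∈ Γ.neighborFinset (l.get ⟨n, hn⟩), ((l.take n).count w : ℤ))
        - 3 * ((l.take n).count (l.get ⟨n, hn⟩) : ℤ) := by
    intro n hn
    have h := hunst ⟨n, hn⟩
    rw [countP_adj_eq_sum] at h
    push_cast at h ⊢
    exact h
  -- every prefix has no duplicates
  have nodup : ∀ n, (l.take n).Nodup := by
    intro n
    induction n with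
    | zero => simp
    | succ n ih =>
      by_cases hn : n < l.length
      · have hmem : l.get ⟨n, hn⟩ ∉ l.take n := by
          intro hm
          set u := l.get ⟨n, hn⟩ with hu
          have hc : 1 ≤ (l.take n).count u := by have := List.count_pos_iff.mpr hm; omega
          have hcZ : (1:ℤ) ≤ ((l.take n).count u : ℤ) := by exact_mod_cast hc
          have hsum : (∑ w ∈ Γ.neighborFinset u, ((l.take n).count w : ℤ))
              ≤ (Γ.degree u : ℤ) := by
            calc (∑ w ∈ Γ.neighborFinset u, ((l.take n).count w : ℤ))
                ≤ ∑ w ∈ Γ.neighborFinset u, (1:ℤ) := by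
                  refine Finset.sum_le_sum fun w _ => ?_
                  exact_mod_cast List.nodup_iff_count_le_one.mp ih w
              _ = ((Γ.neighborFinset u).card : ℤ) := by simp
              _ = (Γ.degree u : ℤ) := rfl
          have hk := key n hn
          have hχu : χ u ≤ 3 := (hstable u trivial).2
          by_cases huo : u = o
          · have hdo : (Γ.degree u : ℤ) ≤ 2 := by
              rw [huo]; exact_mod_cast Nat.lt_succ_iff.mp ho
            rw [← hu, if_pos huo] at hk
            linarith
          · have hdu : (Γ.degree u : ℤ) ≤ 3 := by exact_mod_cast hdeg u
            rw [← hu, if_neg huo] at hk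
            linarith
        rw [List.take_succ, List.getElem?_eq_getElem hn]
        simp only [Option.toList_some]
        rw [List.nodup_append]
        refine ⟨ih, List.nodup_singleton _, ?_⟩
        intro a ha b hb
        rw [List.mem_singleton] at hb
        subst hb
        rintro rfl; exact hmem ha
      · rw [List.take_of_length_le (by omega)]
        rwa [List.take_of_length_le (by omega)] at ih
  -- no prefix meets S
  have notS : ∀ n, ∀ x ∈ l.take n, x ∉ S := by
    intro n
    induction n with
    | zero => simp
    | succ n ih =>
      by_cases hn : n < l.length
      · intro x hx hxS
        rw [List.take_succ, List.getElem?_eq_getElem hn] at hx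
        simp only [Option.toList_some, List.mem_append, List.mem_singleton] at hx
        rcases hx with hx | hx
        · exact ih x hx hxS
        · -- x = l.get ⟨n, hn⟩ is in S : contradiction
          set u := l.get ⟨n, hn⟩ with hu
          have hxu : x = u := hx
          rw [hxu] at hxS
          have hcS : ∀ w ∈ S, (l.take n).count w = 0 := by
            intro w hw
            rw [List.count_eq_zero]
            intro hm
            exact ih w hm hw
          have hcu : ((l.take n).count u : ℤ) = 0 := by
            rw [hcS u hxS]; rfl
          -- split the neighbor sum
          set N := Γ.neighborFinset u with hN
          have hsplit : (∑ w ∈ N, ((l.take n).count w : ℤ))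
              = ∑ w ∈ N.filter (· ∈ S), ((l.take n).count w : ℤ)
                + ∑ w ∈ N.filter (· ∉ S), ((l.take n).count w : ℤ) :=
            (Finset.sum_filter_add_sum_filter_not N (· ∈ S) _).symm
          have h1 : ∑ w ∈ N.filter (· ∈ S), ((l.take n).count w : ℤ) = 0 := by
            refine Finset.sum_eq_zero fun w hw => ?_
            rw [Finset.mem_filter] at hw
            rw [hcS w hw.2]; rfl
          have h2 : ∑ w ∈ N.filter (· ∉ S), ((l.take n).count w : ℤ)
              ≤ ((N.filter (· ∉ S)).card : ℤ) := by
            calc ∑ w ∈ N.filter (· ∉ S), ((l.take n).count w : ℤ)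
                ≤ ∑ w ∈ N.filter (· ∉ S), (1:ℤ) := by
                  refine Finset.sum_le_sum fun w _ => ?_
                  exact_mod_cast List.nodup_iff_count_le_one.mp (nodup n) w
              _ = _ := by simp
          have hcard : (N.filter (· ∈ S)).card + (N.filter (· ∉ S)).card = N.card :=
            Finset.card_filter_add_card_filter_not _
          have hfilt : S.filter (fun w => Γ.Adj u w) = N.filter (· ∈ S) := by
            ext w
            simp only [Finset.mem_filter, hN, SimpleGraph.mem_neighborFinset]
            tauto
          have hχS : χ u ≤ ((N.filter (· ∈ S)).card : ℤ) := by
            rw [← hfilt]; exact hS.2 u hxS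
          have hNcard : (N.card : ℤ) = (Γ.degree u : ℤ) := rfl
          have hk := key n hn
          rw [← hu, hcu, hsplit, h1] at hk
          have hcardZ : ((N.filter (· ∈ S)).card : ℤ) + ((N.filter (· ∉ S)).card : ℤ)
              = (Γ.degree u : ℤ) := by rw [← hNcard]; exact_mod_cast hcard
          by_cases huo : u = o
          · have hdo : (Γ.degree u : ℤ) ≤ 2 := by
              rw [huo]; exact_mod_cast Nat.lt_succ_iff.mp ho
            simp only [if_pos huo] at hk
            linarith
          · have hdu : (Γ.degree u : ℤ) ≤ 3 := by exact_mod_cast hdeg u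
            simp only [if_neg huo] at hk
            linarith
      · rw [List.take_of_length_le (by omega)]
        rwa [List.take_of_length_le (by omega)] at ih
  intro u hu
  have := notS l.length u
  rw [List.take_length] at this
  exact this hu


/-- A forbidden subconfiguration: a nonempty vertex set `S` such that each of its
vertices has height at most the number of its neighbors inside `S`. -/
def IsFSC {V : Type*} [DecidableEq V] [Fintype V] (Γ : SimpleGraph V)
    [DecidableRel Γ.Adj] (χ : V → ℤ) (S : Finset V) : Prop :=
  S.Nonempty ∧ ∀ u ∈ S, χ u ≤ ((S.filter fun w => Γ.Adj u w).card : ℤ)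

/-- On a decorated rooted subtree of the expanded cactus (a finite graph of maximum
degree 3 whose origin/root `o` has degree less than 3), if `χ` is stable with
`χ o = 3` and `S` is a forbidden subconfiguration, then no vertex of a toppling
sequence for the avalanche caused by adding a grain at `o` lies in `S`. -/
theorem stmt_11 {V : Type*} [DecidableEq V] [Fintype V]
    (Γ : SimpleGraph V) [DecidableRel Γ.Adj]
    (hdeg : ∀ u : V, Γ.degree u ≤ 3) (o : V) (ho : Γ.degree o < 3)
    (χ : V → ℤ) (hstable : IsStableConf 3 Set.univ χ) (hχo : χ o = 3)
    (l : List V) (hl : IsTopplingSeq Γ 3 Set.univ χ o l)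
    (S : Finset V) (hS : IsFSC Γ χ S) :
    ∀ u ∈ l, u ∉ S := by
  refine fsc_aux Γ hdeg o ho χ (fun u hu => hstable u hu) hχo l ?_ S ⟨hS.1, hS.2⟩
  intro i
  have h := hl.2.1 i
  unfold sandConf at h
  push_cast at h ⊢
  exact h
end

section
/- Let a_n be the n-th power series coefficient of f(x) = (1 - 8x - sqrt((1-20x)(1+4x)))/(6x) at 0. Then there exist positive constants C_1, C_2 and N such that for all n > N, C_1 * 20^n * n^{-3/2} ≤ a_n ≤ C_2 * 20^n * n^{-3/2}. -/
open Nat Finset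

lemma cb_sq_upper : ∀ k : ℕ, 1 ≤ k → (2*k+1) * (Nat.centralBinom k)^2 ≤ 16^k := by
  intro k hk
  induction k with
  | zero => omega
  | succ n ih =>
    rcases Nat.eq_or_lt_of_le hk with h | h
    · simp [← h, Nat.centralBinom]
    · have hn : 1 ≤ n := by omega
      have ihn := ih hn
      have hrec := Nat.succ_mul_centralBinom_succ n
      have key : (n+1)^2 * ((2*(n+1)+1) * (Nat.centralBinom (n+1))^2) ≤ (n+1)^2 * 16^(n+1) := by
        have h1 : (n+1)^2 * ((2*(n+1)+1) * (Nat.centralBinom (n+1))^2)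
            = (2*n+3) * ((n+1) * Nat.centralBinom (n+1))^2 := by ring_nf
        rw [h1, hrec]
        have h2 : (2*n+3) * (2 * (2*n+1) * Nat.centralBinom n)^2
            = (4*(2*n+1)*(2*n+3)) * ((2*n+1) * (Nat.centralBinom n)^2) := by ring
        rw [h2]
        calc (4*(2*n+1)*(2*n+3)) * ((2*n+1) * (Nat.centralBinom n)^2)
            ≤ (4*(2*n+1)*(2*n+3)) * 16^n := Nat.mul_le_mul_left _ ihn
          _ ≤ (16*(n+1)^2) * 16^n := Nat.mul_le_mul_right _ (by nlinarith)
          _ = (n+1)^2 * 16^(n+1) := by ring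
      exact Nat.le_of_mul_le_mul_left key (by positivity)

lemma cb_sq_lower : ∀ k : ℕ, 1 ≤ k → 16^k ≤ 4*k * (Nat.centralBinom k)^2 := by
  intro k hk
  induction k with
  | zero => omega
  | succ n ih =>
    rcases Nat.eq_or_lt_of_le hk with h | h
    · simp [← h, Nat.centralBinom]
    · have hn : 1 ≤ n := by omega
      have ihn := ih hn
      have hrec := Nat.succ_mul_centralBinom_succ n
      have key : (n+1)^2 * 16^(n+1) ≤ (n+1)^2 * (4*(n+1) * (Nat.centralBinom (n+1))^2) := by
        have h1 : (n+1)^2 * (4*(n+1) * (Nat.centralBinom (n+1))^2)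
            = 4*(n+1) * ((n+1) * Nat.centralBinom (n+1))^2 := by ring
        rw [h1, hrec]
        have h2 : 4*(n+1) * (2 * (2*n+1) * Nat.centralBinom n)^2
            = ((16*(n+1)*(2*n+1)*(2*n+1))) * ((Nat.centralBinom n)^2) := by ring
        rw [h2]
        calc (n+1)^2 * 16^(n+1) = (16*(n+1)^2) * 16^n := by ring
          _ ≤ (16*(n+1)^2) * (4*n*(Nat.centralBinom n)^2) := Nat.mul_le_mul_left _ ihn
          _ = (64*n*(n+1)^2) * ((Nat.centralBinom n)^2) := by ring
          _ ≤ ((16*(n+1)*(2*n+1)*(2*n+1))) * ((Nat.centralBinom n)^2) :=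
              Nat.mul_le_mul_right _ (by nlinarith)
      exact Nat.le_of_mul_le_mul_left key (by positivity)

noncomputable def ee (k : ℕ) : ℝ := (Nat.centralBinom k : ℝ) / ((2*(k:ℝ)-1) * 4^k)

lemma ee_pos {k : ℕ} (hk : 1 ≤ k) : 0 < ee k := by
  have hk1 : (1:ℝ) ≤ (k:ℝ) := by exact_mod_cast hk
  have : (0:ℝ) < Nat.centralBinom k := by exact_mod_cast Nat.centralBinom_pos k
  unfold ee
  apply div_pos this
  have : (0:ℝ) < 2*(k:ℝ)-1 := by linarith
  positivity

lemma ee_sq_eq {k : ℕ} (hk : 1 ≤ k) :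
    (ee k)^2 = ((Nat.centralBinom k : ℝ))^2 / ((2*(k:ℝ)-1)^2 * 16^k) := by
  unfold ee
  rw [div_pow, mul_pow]
  congr 2
  rw [← pow_mul, mul_comm k 2, pow_mul]
  norm_num

lemma ee_sq_le {k : ℕ} (hk : 1 ≤ k) : (ee k)^2 * ((k:ℝ)^2 * k) ≤ 1 := by
  have hk1 : (1:ℝ) ≤ (k:ℝ) := by exact_mod_cast hk
  have h2k : (0:ℝ) < 2*(k:ℝ)-1 := by linarith
  have hC : (0:ℝ) < Nat.centralBinom k := by exact_mod_cast Nat.centralBinom_pos k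
  have hup : (2*(k:ℝ)+1) * ((Nat.centralBinom k : ℝ))^2 ≤ 16^k := by
    have := (Nat.cast_le (α := ℝ)).2 (cb_sq_upper k hk)
    push_cast at this
    convert this using 2 <;> push_cast <;> ring
  rw [ee_sq_eq hk, div_mul_eq_mul_div, div_le_one (by positivity)]
  have key : ((k:ℝ)^2*k) ≤ (2*(k:ℝ)-1)^2 * (2*(k:ℝ)+1) := by nlinarith
  calc ((Nat.centralBinom k : ℝ))^2 * ((k:ℝ)^2*k)
      ≤ ((Nat.centralBinom k : ℝ))^2 * ((2*(k:ℝ)-1)^2 * (2*(k:ℝ)+1)) :=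
        mul_le_mul_of_nonneg_left key (by positivity)
    _ = (2*(k:ℝ)-1)^2 * ((2*(k:ℝ)+1) * ((Nat.centralBinom k : ℝ))^2) := by ring
    _ ≤ (2*(k:ℝ)-1)^2 * 16^k := mul_le_mul_of_nonneg_left hup (by positivity)

lemma ee_sq_ge {k : ℕ} (hk : 1 ≤ k) : 1 ≤ (ee k)^2 * (16 * ((k:ℝ)^2 * k)) := by
  have hk1 : (1:ℝ) ≤ (k:ℝ) := by exact_mod_cast hk
  have h2k : (0:ℝ) < 2*(k:ℝ)-1 := by linarith
  have hC : (0:ℝ) < Nat.centralBinom k := by exact_mod_cast Nat.centralBinom_pos k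
  have hlo : (16:ℝ)^k ≤ 4*(k:ℝ) * ((Nat.centralBinom k : ℝ))^2 := by
    have := (Nat.cast_le (α := ℝ)).2 (cb_sq_lower k hk)
    push_cast at this
    convert this using 2 <;> push_cast <;> ring
  rw [ee_sq_eq hk, div_mul_eq_mul_div, le_div_iff₀ (by positivity), one_mul]
  calc (2*(k:ℝ)-1)^2 * 16^k
      ≤ (2*(k:ℝ)-1)^2 * (4*(k:ℝ) * ((Nat.centralBinom k : ℝ))^2) :=
        mul_le_mul_of_nonneg_left hlo (by positivity)
    _ ≤ ((Nat.centralBinom k : ℝ))^2 * (16 * ((k:ℝ)^2*k)) := by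
        nlinarith [sq_nonneg ((Nat.centralBinom k : ℝ)), sq_nonneg ((k:ℝ)-1)]

noncomputable def pp (k : ℕ) : ℝ := ((k:ℝ) * Real.sqrt k)⁻¹

lemma pp_pos {k : ℕ} (hk : 1 ≤ k) : 0 < pp k := by
  have hk1 : (1:ℝ) ≤ (k:ℝ) := by exact_mod_cast hk
  have : (0:ℝ) < Real.sqrt k := Real.sqrt_pos.2 (by linarith)
  unfold pp
  positivity

lemma pp_sq (k : ℕ) : (pp k)^2 = ((k:ℝ)^2 * k)⁻¹ := by
  unfold pp
  rw [inv_pow, mul_pow, Real.sq_sqrt (by positivity : (0:ℝ) ≤ (k:ℝ))]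

lemma ee_le_pp {k : ℕ} (hk : 1 ≤ k) : ee k ≤ pp k := by
  have hk1 : (1:ℝ) ≤ (k:ℝ) := by exact_mod_cast hk
  have hK : (0:ℝ) < (k:ℝ)^2 * k := by positivity
  have h1 : (ee k)^2 ≤ (pp k)^2 := by
    rw [pp_sq, ← one_div]
    exact (le_div_iff₀ hK).mpr (ee_sq_le hk)
  have := Real.sqrt_le_sqrt h1
  rwa [Real.sqrt_sq (ee_pos hk).le, Real.sqrt_sq (pp_pos hk).le] at this

lemma pp_le_four_ee {k : ℕ} (hk : 1 ≤ k) : pp k ≤ 4 * ee k := by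
  have hk1 : (1:ℝ) ≤ (k:ℝ) := by exact_mod_cast hk
  have hK : (0:ℝ) < (k:ℝ)^2 * k := by positivity
  have h1 : (pp k)^2 ≤ (4 * ee k)^2 := by
    rw [pp_sq, mul_pow]
    have h2 : ((k:ℝ)^2*k)⁻¹ * ((ee k)^2 * (16 * ((k:ℝ)^2 * k))) = 16 * (ee k)^2 := by
      field_simp
    calc ((k:ℝ)^2*k)⁻¹ = ((k:ℝ)^2*k)⁻¹ * 1 := by ring
      _ ≤ ((k:ℝ)^2*k)⁻¹ * ((ee k)^2 * (16 * ((k:ℝ)^2 * k))) :=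
          mul_le_mul_of_nonneg_left (ee_sq_ge hk) (by positivity)
      _ = 4^2 * (ee k)^2 := by rw [h2]; norm_num
  have := Real.sqrt_le_sqrt h1
  rwa [Real.sqrt_sq (pp_pos hk).le, Real.sqrt_sq (by nlinarith [ee_pos hk] : (0:ℝ) ≤ 4 * ee k)] at this

lemma ee_pair {j k : ℕ} (hj : 1 ≤ j) (hk : 1 ≤ k) :
    ee j * ee k ≤ 2 * Real.sqrt 2 * pp (j+k) := by
  have h1 : ee j * ee k ≤ pp j * pp k :=
    mul_le_mul (ee_le_pp hj) (ee_le_pp hk) (ee_pos hk).le (pp_pos hj).le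
  refine h1.trans ?_
  have hx1 : (1:ℝ) ≤ (j:ℝ) := by exact_mod_cast hj
  have hy1 : (1:ℝ) ≤ (k:ℝ) := by exact_mod_cast hk
  set x := (j:ℝ)
  set y := (k:ℝ)
  have hppm : pp (j+k) = ((x+y) * Real.sqrt (x+y))⁻¹ := by
    unfold pp; push_cast; ring_nf; rfl
  have hppjk : pp j * pp k = ((x*y) * Real.sqrt (x*y))⁻¹ := by
    unfold pp
    rw [← mul_inv, Real.sqrt_mul (by positivity)]
    congr 1; ring
  rw [hppm, hppjk]
  have hA : (0:ℝ) < (x*y) * Real.sqrt (x*y) := by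
    have h : (0:ℝ) < Real.sqrt (x*y) := Real.sqrt_pos.2 (by nlinarith)
    exact mul_pos (by nlinarith) h
  have hB : (0:ℝ) < (x+y) * Real.sqrt (x+y) := by
    have h : (0:ℝ) < Real.sqrt (x+y) := Real.sqrt_pos.2 (by nlinarith)
    exact mul_pos (by nlinarith) h
  have hxy : x + y ≤ 2*(x*y) := by nlinarith
  have hmono : (x+y) * Real.sqrt (x+y) ≤ (2*(x*y)) * Real.sqrt (2*(x*y)) :=
    mul_le_mul hxy (Real.sqrt_le_sqrt hxy) (Real.sqrt_nonneg _) (by nlinarith)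

  have hkey : (x+y) * Real.sqrt (x+y) ≤ 2 * Real.sqrt 2 * ((x*y) * Real.sqrt (x*y)) := by
    refine hmono.trans_eq ?_
    rw [Real.sqrt_mul (by norm_num : (0:ℝ) ≤ 2)]
    ring
  rw [show (2 * Real.sqrt 2 * ((x+y) * Real.sqrt (x+y))⁻¹ : ℝ)
      = (((x+y) * Real.sqrt (x+y)) / (2 * Real.sqrt 2))⁻¹ by
    rw [inv_div]; rw [div_eq_mul_inv]]
  apply inv_anti₀
  · have h2 : (0:ℝ) < 2 * Real.sqrt 2 := by positivity
    positivity
  · rw [div_le_iff₀ (by positivity)]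
    calc (x+y) * Real.sqrt (x+y) ≤ 2 * Real.sqrt 2 * ((x*y) * Real.sqrt (x*y)) := hkey
      _ = (x*y) * Real.sqrt (x*y) * (2 * Real.sqrt 2) := by ring

lemma pp_le_one {k : ℕ} (hk : 1 ≤ k) : pp k ≤ 1 := by
  have hk1 : (1:ℝ) ≤ (k:ℝ) := by exact_mod_cast hk
  have h1 : (1:ℝ) ≤ Real.sqrt k := by
    rw [show (1:ℝ) = Real.sqrt 1 by simp]
    exact Real.sqrt_le_sqrt hk1
  unfold pp
  rw [inv_le_one_iff₀]
  right; nlinarith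

noncomputable def qq : ℕ → ℝ
  | 0 => 1
  | (k+1) => (-1)^k * (catalan k) / (2*4^k)

lemma ee_succ (k : ℕ) : ee (k+1) = (catalan k : ℝ) / (2*4^k) := by
  have hrec : ((k:ℝ)+1) * (Nat.centralBinom (k+1) : ℝ)
      = 2*(2*(k:ℝ)+1) * (Nat.centralBinom k : ℝ) := by
    have := Nat.succ_mul_centralBinom_succ k
    have := congrArg (Nat.cast : ℕ → ℝ) this
    push_cast at this
    linarith
  have hcat : ((k:ℝ)+1) * (catalan k : ℝ) = (Nat.centralBinom k : ℝ) := by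
    have := succ_mul_catalan_eq_centralBinom k
    have := congrArg (Nat.cast : ℕ → ℝ) this
    push_cast at this
    linarith
  have hCB : (Nat.centralBinom (k+1) : ℝ) = 2*(2*(k:ℝ)+1) * (catalan k : ℝ) := by
    have hk1 : ((k:ℝ)+1) ≠ 0 := by positivity
    rw [← hcat] at hrec
    apply mul_left_cancel₀ hk1
    rw [hrec]; ring
  unfold ee
  rw [hCB]
  have h4 : ((4:ℝ))^(k+1) = 4 * 4^k := by ring
  push_cast
  rw [h4]
  have h2k : (2*((k:ℝ)+1)-1) = 2*(k:ℝ)+1 := by ring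
  rw [h2k]
  have hne : (2*(k:ℝ)+1) ≠ 0 := by positivity
  field_simp
  ring

lemma abs_qq_succ (k : ℕ) : |qq (k+1)| = ee (k+1) := by
  rw [ee_succ]
  show |(-1)^k * (catalan k : ℝ) / (2*4^k)| = _
  rw [abs_div, abs_mul, abs_pow, abs_neg, abs_one, one_pow, one_mul,
    abs_of_nonneg (by positivity : (0:ℝ) ≤ (catalan k : ℝ)),
    abs_of_nonneg (by positivity : (0:ℝ) ≤ (2*(4:ℝ)^k))]

lemma abs_qq_le_one (k : ℕ) : |qq k| ≤ 1 := by
  cases k with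
  | zero => show |(1:ℝ)| ≤ 1; simp
  | succ n =>
    rw [abs_qq_succ]
    exact (ee_le_pp (Nat.le_add_left 1 n)).trans (pp_le_one (Nat.le_add_left 1 n))

lemma qq_zero : qq 0 = 1 := rfl
lemma qq_one : qq 1 = 1/2 := by
  show (-1)^0 * (catalan 0 : ℝ) / (2*4^0) = 1/2
  simp [catalan_zero]

lemma catalan_le_four_pow (k : ℕ) : (catalan k : ℝ) ≤ 4^k := by
  have h1 : (catalan k : ℝ) ≤ (Nat.centralBinom k : ℝ) := by
    have := succ_mul_catalan_eq_centralBinom k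
    have := congrArg (Nat.cast : ℕ → ℝ) this
    push_cast at this
    nlinarith [Nat.cast_nonneg (α := ℝ) (catalan k), Nat.cast_nonneg (α := ℝ) k]
  refine h1.trans ?_
  rcases Nat.eq_zero_or_pos k with h | h
  · subst h; simp [Nat.centralBinom_zero]
  · have hup := (Nat.cast_le (α := ℝ)).2 (cb_sq_upper k h)
    push_cast at hup
    have hk1 : (1:ℝ) ≤ (k:ℝ) := by exact_mod_cast h
    have hsq : ((Nat.centralBinom k : ℝ))^2 ≤ ((4:ℝ)^k)^2 := by
      have h16 : ((16:ℝ))^k = ((4:ℝ)^k)^2 := by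
        rw [← pow_mul, mul_comm k 2, pow_mul]; norm_num
      nlinarith [Nat.cast_nonneg (α := ℝ) (Nat.centralBinom k), sq_nonneg ((Nat.centralBinom k:ℝ))]
    have := Real.sqrt_le_sqrt hsq
    rwa [Real.sqrt_sq (by positivity), Real.sqrt_sq (by positivity)] at this

lemma catalan_conv (n : ℕ) :
    catalan (n+1) = ∑ k ∈ range (n+1), catalan k * catalan (n - k) := by
  rw [catalan_succ]
  rw [Fin.sum_univ_eq_sum_range (fun i => catalan i * catalan (n - i)) (n+1)]

lemma hqsum (y : ℝ) (hy : |y| ≤ 1/2) :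
    HasSum (fun k => qq k * y^k) (Real.sqrt (1+y)) := by
  set z : ℝ := -y/4 with hz_def
  have hz : |z| ≤ 1/8 := by
    rw [hz_def, abs_div, abs_neg]
    rw [show |(4:ℝ)| = 4 by norm_num]
    linarith
  set f : ℕ → ℝ := fun k => (catalan k : ℝ) * z^k with hf_def
  have hbound : ∀ k, ‖f k‖ ≤ (1/2:ℝ)^k := by
    intro k
    rw [hf_def]
    simp only [norm_mul, norm_pow, Real.norm_eq_abs]
    rw [abs_of_nonneg (by positivity : (0:ℝ) ≤ (catalan k : ℝ))]
    calc (catalan k : ℝ) * |z|^k ≤ 4^k * (1/8)^k := by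
          apply mul_le_mul (catalan_le_four_pow k) (pow_le_pow_left₀ (abs_nonneg z) hz k)
            (by positivity) (by positivity)
      _ = (1/2:ℝ)^k := by rw [← mul_pow]; norm_num
  have hsummN : Summable (fun k => ‖f k‖) :=
    Summable.of_nonneg_of_le (fun k => norm_nonneg _) hbound
      (summable_geometric_of_lt_one (by norm_num) (by norm_num))
  have hsumm : Summable f := hsummN.of_norm
  set T : ℝ := ∑' k, f k with hT_def
  have hT : HasSum f T := hsumm.hasSum
  -- Cauchy product
  have hprod := hasSum_sum_range_mul_of_summable_norm hsummN hsummN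
  have hterm : ∀ n, (∑ k ∈ range (n+1), f k * f (n-k)) = (catalan (n+1) : ℝ) * z^n := by
    intro n
    have h1 : ∀ k ∈ range (n+1), f k * f (n-k) = ((catalan k : ℝ) * (catalan (n-k) : ℝ)) * z^n := by
      intro k hk
      rw [Finset.mem_range] at hk
      have hkn : k ≤ n := Nat.lt_succ_iff.1 hk
      rw [hf_def]
      simp only
      rw [mul_mul_mul_comm, ← pow_add, Nat.add_sub_cancel' hkn]
    rw [Finset.sum_congr rfl h1, ← Finset.sum_mul]
    congr 1
    rw [catalan_conv n]
    push_cast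
    rfl
  rw [funext hterm, ← hT_def] at hprod
  have hshift : HasSum (fun n => f (n+1)) (T - 1) := by
    apply (hasSum_nat_add_iff 1).2
    have h0 : T - 1 + ∑ i ∈ range 1, f i = T := by
      simp [hf_def, catalan_zero]
    rwa [h0]
  have hzT : z * (T * T) = T - 1 := by
    have h2 := hprod.mul_left z
    rw [show (fun i => z * ((catalan (i+1) : ℝ) * z^i)) = (fun n => f (n+1)) from
      funext fun n => by rw [hf_def]; ring] at h2
    exact h2.unique hshift
  set S : ℝ := 1 + (y/2) * T with hS_def
  have hS2 : S^2 = 1 + y := by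
    have hzT' := hzT
    rw [hz_def] at hzT'
    rw [hS_def]
    linear_combination (-y) * hzT'
  have hTbound : |T| ≤ 2 := by
    rw [hT_def]
    calc |∑' k, f k| ≤ ∑' k, ‖f k‖ := by
          rw [show |∑' k, f k| = ‖∑' k, f k‖ from rfl]
          exact norm_tsum_le_tsum_norm hsummN
      _ ≤ ∑' k, (1/2:ℝ)^k := by
          apply Summable.tsum_le_tsum hbound hsummN
          exact summable_geometric_of_lt_one (by norm_num) (by norm_num)
      _ = 2 := by
          rw [tsum_geometric_of_lt_one (by norm_num) (by norm_num)]
          norm_num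
  have hSpos : 0 ≤ S := by
    have h1 : |(y/2) * T| ≤ 1/2 := by
      rw [abs_mul, abs_div]
      rw [show |(2:ℝ)| = 2 by norm_num]
      calc |y|/2 * |T| ≤ (1/2)/2 * 2 := by
            apply mul_le_mul (by linarith) hTbound (abs_nonneg T) (by norm_num)
        _ = 1/2 := by norm_num
    have := neg_abs_le ((y/2) * T)
    rw [hS_def]
    linarith
  have hsqrt : Real.sqrt (1+y) = S := by
    rw [← hS2, Real.sqrt_sq hSpos]
  rw [hsqrt]
  have hfinal : HasSum (fun k => qq (k+1) * y^(k+1)) ((y/2) * T) := by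
    have h3 := hT.mul_left (y/2)
    rw [show (fun i => (y/2) * f i) = (fun k => qq (k+1) * y^(k+1)) from ?_] at h3
    · exact h3
    · funext k
      rw [hf_def]
      show (y/2) * ((catalan k : ℝ) * z^k) = (-1)^k * (catalan k : ℝ) / (2*4^k) * y^(k+1)
      rw [hz_def]
      rw [show (-y/4 : ℝ) = (-1) * y * (4:ℝ)⁻¹ by ring, mul_pow, mul_pow]
      field_simp
      have h14 : ((1:ℝ)/4)^k * 4^k = 1 := by rw [← mul_pow]; norm_num
      linear_combination (y * y^k * (catalan k : ℝ)) * h14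
  have := (hasSum_nat_add_iff (f := fun k => qq k * y^k) 1).1 hfinal
  simp only [Finset.range_one, Finset.sum_singleton, pow_zero, mul_one, qq_zero] at this
  rw [hS_def]
  rw [add_comm]
  exact this

noncomputable def bb (m : ℕ) : ℝ :=
  ∑ k ∈ range (m+1), (qq k * (-20)^k) * (qq (m-k) * 4^(m-k))

lemma hbsum {x : ℝ} (hx : |x| ≤ 1/80) :
    HasSum (fun m => bb m * x^m) (Real.sqrt ((1-20*x)*(1+4*x))) := by
  set f : ℕ → ℝ := fun k => qq k * (-(20*x))^k with hf_def
  set g : ℕ → ℝ := fun k => qq k * (4*x)^k with hg_def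
  have hnf : ∀ k, ‖f k‖ ≤ (1/4:ℝ)^k := by
    intro k
    rw [hf_def]
    show ‖qq k * (-(20*x))^k‖ ≤ _
    rw [Real.norm_eq_abs, abs_mul, abs_pow]
    calc |qq k| * |(-(20*x))|^k ≤ 1 * (1/4)^k := by
          apply mul_le_mul (abs_qq_le_one k) (pow_le_pow_left₀ (abs_nonneg _) ?_ k)
            (by positivity) (by norm_num)
          rw [abs_neg, abs_mul]
          rw [show |(20:ℝ)| = 20 by norm_num]
          linarith
      _ = (1/4:ℝ)^k := by ring
  have hng : ∀ k, ‖g k‖ ≤ (1/4:ℝ)^k := by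
    intro k
    rw [hg_def]
    show ‖qq k * (4*x)^k‖ ≤ _
    rw [Real.norm_eq_abs, abs_mul, abs_pow]
    calc |qq k| * |4*x|^k ≤ 1 * (1/4)^k := by
          apply mul_le_mul (abs_qq_le_one k) (pow_le_pow_left₀ (abs_nonneg _) ?_ k)
            (by positivity) (by norm_num)
          rw [abs_mul, show |(4:ℝ)| = 4 by norm_num]
          linarith
      _ = (1/4:ℝ)^k := by ring
  have hsf : Summable (fun k => ‖f k‖) :=
    Summable.of_nonneg_of_le (fun k => norm_nonneg _) hnf
      (summable_geometric_of_lt_one (by norm_num) (by norm_num))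
  have hsg : Summable (fun k => ‖g k‖) :=
    Summable.of_nonneg_of_le (fun k => norm_nonneg _) hng
      (summable_geometric_of_lt_one (by norm_num) (by norm_num))
  have hF : HasSum f (Real.sqrt (1-20*x)) := by
    have := hqsum (-(20*x)) (by rw [abs_neg, abs_mul, show |(20:ℝ)| = 20 by norm_num]; linarith)
    rw [show (1 + -(20*x) : ℝ) = 1 - 20*x by ring] at this
    exact this
  have hG : HasSum g (Real.sqrt (1+4*x)) :=
    hqsum (4*x) (by rw [abs_mul, show |(4:ℝ)| = 4 by norm_num]; linarith)
  have hprod := hasSum_sum_range_mul_of_summable_norm hsf hsg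
  rw [hF.tsum_eq, hG.tsum_eq] at hprod
  have hterm : ∀ n, (∑ k ∈ range (n+1), f k * g (n-k)) = bb n * x^n := by
    intro n
    unfold bb
    rw [Finset.sum_mul]
    apply Finset.sum_congr rfl
    intro k hk
    rw [Finset.mem_range] at hk
    have hkn : k ≤ n := Nat.lt_succ_iff.1 hk
    rw [hf_def, hg_def]
    simp only
    have hxx : x^k * x^(n-k) = x^n := by rw [← pow_add, Nat.add_sub_cancel' hkn]
    rw [show (-(20*x):ℝ) = (-20)*x by ring, mul_pow, mul_pow ((4:ℝ)) x]
    linear_combination (qq k * (-20)^k * (qq (n-k) * 4^(n-k))) * hxx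
  rw [funext hterm] at hprod
  have hmul : Real.sqrt (1-20*x) * Real.sqrt (1+4*x) = Real.sqrt ((1-20*x)*(1+4*x)) := by
    rw [← Real.sqrt_mul (by cases abs_le.1 hx; linarith)]
  rwa [hmul] at hprod

lemma bb_zero : bb 0 = 1 := by
  unfold bb
  rw [Finset.sum_range_one]
  simp [qq_zero]

lemma bb_one : bb 1 = -8 := by
  unfold bb
  rw [Finset.sum_range_succ, Finset.sum_range_one]
  norm_num [qq_zero, qq_one]

noncomputable def AA : ℕ → ℝ := fun n => if n = 0 then 0 else -bb (n+1)/6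

lemma hAAsum {x : ℝ} (hx0 : x ≠ 0) (hx : |x| ≤ 1/80) :
    HasSum (fun n => AA n * x^n)
      ((1 - 8*x - Real.sqrt ((1-20*x)*(1+4*x)))/(6*x)) := by
  set R := Real.sqrt ((1-20*x)*(1+4*x)) with hR_def
  have h1 : HasSum (fun m => -(bb m * x^m)) (-R) := (hbsum hx).neg
  have h2 : HasSum (fun n => -(bb (n+2) * x^(n+2))) (1 - 8*x - R) := by
    apply (hasSum_nat_add_iff (f := fun m => -(bb m * x^m)) 2).2
    have heq : (1 - 8*x - R) + ∑ i ∈ range 2, -(bb i * x^i) = -R := by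
      rw [Finset.sum_range_succ, Finset.sum_range_one, bb_zero, bb_one]
      ring
    rwa [heq]
  have h3 : HasSum (fun n => AA (n+1) * x^(n+1)) ((1 - 8*x - R)/(6*x)) := by
    have h4 := h2.mul_right (6*x)⁻¹
    rw [show (fun n => -(bb (n+2) * x^(n+2)) * (6*x)⁻¹)
        = (fun n => AA (n+1) * x^(n+1)) from ?_] at h4
    · rw [div_eq_mul_inv]
      exact h4
    · funext n
      show -(bb (n+2) * x^(n+2)) * (6*x)⁻¹ = (-bb (n+1+1)/6) * x^(n+1)
      have h6x : (6*x) ≠ 0 := by simp [hx0]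
      field_simp
      ring
  have h5 := (hasSum_nat_add_iff (f := fun n => AA n * x^n) 1).1 h3
  simp only [Finset.range_one, Finset.sum_singleton, pow_zero, mul_one] at h5
  rw [show AA 0 = 0 from rfl] at h5
  simpa using h5

lemma coeff_unique {c : ℕ → ℝ} {ε : ℝ} (hε : 0 < ε)
    (h : ∀ x : ℝ, 0 < |x| → |x| < ε → HasSum (fun n => c n * x^n) 0) : ∀ n, c n = 0 := by
  have base : ∀ m : ℕ, (∀ x : ℝ, 0 < |x| → |x| < ε →
      HasSum (fun n => c (n+m) * x^n) 0) → c m = 0 := by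
    intro m hm
    have hx0p : (0:ℝ) < ε/2 := by positivity
    have hS := hm (ε/2) (by rw [abs_of_pos hx0p]; exact hx0p)
      (by rw [abs_of_pos hx0p]; linarith)
    have habs : Filter.Tendsto (fun n => |c (n+m) * (ε/2)^n|) Filter.atTop (nhds 0) := by
      have h0 := hS.summable.tendsto_atTop_zero.abs
      simpa using h0
    obtain ⟨M, hM⟩ := habs.bddAbove_range
    have hMb : ∀ n, |c (n+m)| * (ε/2)^n ≤ M := by
      intro n
      have h1 := hM (Set.mem_range_self n)
      rwa [abs_mul, abs_pow, abs_of_pos hx0p] at h1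
    set M' : ℝ := M + 1 with hM'_def
    have hM'pos : 0 < M' := by
      have := hMb 0
      simp at this
      have : (0:ℝ) ≤ M := le_trans (abs_nonneg _) this
      rw [hM'_def]; linarith
    have hMb' : ∀ n, |c (n+m)| ≤ M' / (ε/2)^n := by
      intro n
      rw [le_div_iff₀ (by positivity)]
      exact (hMb n).trans (by rw [hM'_def]; linarith)
    have key : ∀ t : ℝ, 0 < t → t ≤ ε/4 → |c m| ≤ (4*M'/ε) * t := by
      intro t ht hte
      have hta : 0 < |t| := by rw [abs_of_pos ht]; exact ht
      have hte' : |t| < ε := by rw [abs_of_pos ht]; linarith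
      have hS' := hm t hta hte'
      have h' : HasSum (fun n => c (n+1+m) * t^(n+1)) (-(c m)) := by
        apply (hasSum_nat_add_iff (f := fun n => c (n+m) * t^n) 1).2
        have heq : -(c m) + ∑ i ∈ range 1, c (i+m) * t^i = 0 := by
          simp
        rwa [heq]
      set r : ℝ := 2*t/ε with hr_def
      have hr0 : 0 < r := by rw [hr_def]; positivity
      have hr12 : r ≤ 1/2 := by rw [hr_def]; rw [div_le_iff₀ hε]; linarith
      have hgeo : HasSum (fun n => (M'*r) * r^n) ((M'*r) * (1-r)⁻¹) :=
        (hasSum_geometric_of_lt_one hr0.le (by linarith)).mul_left (M'*r)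
      have hbnd : ∀ n, ‖c (n+1+m) * t^(n+1)‖ ≤ (M'*r) * r^n := by
        intro n
        rw [Real.norm_eq_abs, abs_mul, abs_pow, abs_of_pos ht]
        have h1 : |c (n+1+m)| ≤ M' / (ε/2)^(n+1) := hMb' (n+1)
        have h2 : |c (n+1+m)| * t^(n+1) ≤ (M' / (ε/2)^(n+1)) * t^(n+1) :=
          mul_le_mul_of_nonneg_right h1 (by positivity)
        refine h2.trans ?_
        have h3 : (M' / (ε/2)^(n+1)) * t^(n+1) = M' * r^(n+1) := by
          rw [hr_def, div_pow, div_pow]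
          field_simp
          ring
        rw [h3]
        exact le_of_eq (by ring)
      have hle := tsum_of_norm_bounded hgeo hbnd
      rw [h'.tsum_eq] at hle
      rw [Real.norm_eq_abs, abs_neg] at hle
      have hinv : (1-r)⁻¹ ≤ 2 := by
        rw [inv_le_comm₀ (by linarith) (by norm_num)]
        linarith
      calc |c m| ≤ (M'*r) * (1-r)⁻¹ := hle
        _ ≤ (M'*r) * 2 := mul_le_mul_of_nonneg_left hinv (by positivity)
        _ = (4*M'/ε) * t := by rw [hr_def]; field_simp; ring
    by_contra hne
    have hpos : 0 < |c m| := abs_pos.2 hne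
    set t : ℝ := min (ε/4) (|c m| * ε/(8*M')) with ht_def
    have ht1 : 0 < t := by
      rw [ht_def]
      apply lt_min (by positivity) (by positivity)
    have ht2 : t ≤ ε/4 := min_le_left _ _
    have := key t ht1 ht2
    have ht3 : t ≤ |c m| * ε/(8*M') := min_le_right _ _
    have : |c m| ≤ (4*M'/ε) * (|c m| * ε/(8*M')) := by
      refine this.trans (mul_le_mul_of_nonneg_left ht3 (by positivity))
    have heq : (4*M'/ε) * (|c m| * ε/(8*M')) = |c m|/2 := by
      field_simp
      ring
    rw [heq] at this
    linarith
  have step : ∀ m : ℕ, (∀ x : ℝ, 0 < |x| → |x| < ε →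
      HasSum (fun n => c (n+m) * x^n) 0) → c m = 0 →
      (∀ x : ℝ, 0 < |x| → |x| < ε → HasSum (fun n => c (n+(m+1)) * x^n) 0) := by
    intro m hPm hcm x hx1 hx2
    have hxne : x ≠ 0 := by
      intro hx0
      rw [hx0] at hx1
      simp at hx1
    have h1 : HasSum (fun n => c (n+1+m) * x^(n+1)) 0 := by
      apply (hasSum_nat_add_iff (f := fun n => c (n+m) * x^n) 1).2
      have heq : (0:ℝ) + ∑ i ∈ range 1, c (i+m) * x^i = 0 := by
        simp [hcm]
      rw [heq]
      exact hPm x hx1 hx2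
    have h2 := h1.mul_right x⁻¹
    rw [show (fun n => c (n+1+m) * x^(n+1) * x⁻¹) = (fun n => c (n+(m+1)) * x^n) from ?_] at h2
    · simpa using h2
    · funext n
      rw [show n+1+m = n+(m+1) from by omega, pow_succ]
      field_simp
  have P : ∀ m : ℕ, ∀ x : ℝ, 0 < |x| → |x| < ε →
      HasSum (fun n => c (n+m) * x^n) 0 := by
    intro m
    induction m with
    | zero => simpa using h
    | succ k ih => exact step k ih (base k ih)
  intro n
  exact base n (P n)

lemma qq_succ_eq (k : ℕ) : qq (k+1) = (-1)^k * ee (k+1) := by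
  rw [ee_succ]
  show (-1)^k * (catalan k : ℝ) / (2*4^k) = _
  rw [mul_div_assoc]

lemma sqrt2_le : Real.sqrt 2 ≤ 1.5 := by
  have h := Real.sqrt_le_sqrt (show (2:ℝ) ≤ 1.5^2 by norm_num)
  rwa [Real.sqrt_sq (by norm_num : (0:ℝ) ≤ 1.5)] at h

lemma qq_mul_neg20 {m : ℕ} (hm : 1 ≤ m) : qq m * (-20)^m = -(20^m * ee m) := by
  obtain ⟨s, rfl⟩ : ∃ s, m = s+1 := ⟨m-1, by omega⟩
  rw [qq_succ_eq]
  rw [show ((-20:ℝ))^(s+1) = (-1)^(s+1) * 20^(s+1) by rw [← neg_one_mul 20, mul_pow]]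
  have hodd : ((-1:ℝ))^s * (-1)^(s+1) = -1 := by
    rw [← pow_add]
    exact Odd.neg_one_pow ⟨s, by ring⟩
  calc (-1)^s * ee (s+1) * ((-1)^(s+1) * 20^(s+1))
      = ((-1)^s * (-1)^(s+1)) * (ee (s+1) * 20^(s+1)) := by ring
    _ = -(20^(s+1) * ee (s+1)) := by rw [hodd]; ring

lemma abs_qq_eq {m : ℕ} (hm : 1 ≤ m) : |qq m| = ee m := by
  obtain ⟨s, rfl⟩ : ∃ s, m = s+1 := ⟨m-1, by omega⟩
  exact abs_qq_succ s

lemma bb_est {m : ℕ} (hm : 3 ≤ m) :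
    (1/20) * (20^m * pp m) ≤ -bb m ∧ -bb m ≤ 3 * (20^m * pp m) := by
  have hm1 : 1 ≤ m := by omega
  set F : ℕ → ℝ := fun k => (qq k * (-20)^k) * (qq (m-k) * 4^(m-k)) with hF_def
  have hsplit : bb m = (∑ i ∈ range (m-2), F (i+1)) + F (m-1) + F 0 + F m := by
    show (∑ k ∈ range (m+1), F k) = _
    rw [Finset.sum_range_succ]
    congr 1
    have h2 : ∑ k ∈ range m, F k = (∑ i ∈ range (m-1), F (i+1)) + F 0 := by
      rw [show m = (m-1)+1 from by omega] 
      exact Finset.sum_range_succ' F (m-1)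
    rw [h2]
    have h3 : ∑ i ∈ range (m-1), F (i+1)
        = (∑ i ∈ range (m-2), F (i+1)) + F ((m-2)+1) := by
      rw [show m-1 = (m-2)+1 from by omega]
      exact Finset.sum_range_succ _ (m-2)
    rw [h3, show (m-2)+1 = m-1 from by omega]
  have hFm : F m = -(20^m * ee m) := by
    rw [hF_def]
    simp only [Nat.sub_self, pow_zero, qq_zero, mul_one]
    exact qq_mul_neg20 hm1
  have hppm_pos : 0 < pp m := pp_pos hm1
  have hP_pos : (0:ℝ) < 20^m * pp m := by positivity
  have hF0 : |F 0| ≤ (1/125) * (20^m * pp m) := by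
    rw [hF_def]
    simp only [Nat.sub_zero, pow_zero, qq_zero, one_mul, mul_one]
    rw [abs_mul, abs_qq_eq hm1, abs_pow, show |(4:ℝ)| = 4 by norm_num]
    calc ee m * 4^m ≤ pp m * 4^m :=
          mul_le_mul_of_nonneg_right (ee_le_pp hm1) (by positivity)
      _ ≤ pp m * ((1/125) * 20^m) := by
          apply mul_le_mul_of_nonneg_left ?_ hppm_pos.le
          rw [show (20:ℝ)^m = 4^m * 5^m from by rw [← mul_pow]; norm_num]
          have h5 : (125:ℝ) ≤ 5^m := by
            calc (125:ℝ) = 5^3 := by norm_num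
              _ ≤ 5^m := pow_le_pow_right₀ (by norm_num) hm
          rw [show (1/125 : ℝ) * (4^m * 5^m) = 4^m * (5^m/125) from by ring]
          nlinarith [pow_pos (show (0:ℝ) < 4 by norm_num) m]
      _ = (1/125) * (20^m * pp m) := by ring
  have hmid : ∀ i ∈ range (m-1),
      |F (i+1)| ≤ (2*Real.sqrt 2) * (20^m * pp m) * (1/5:ℝ)^(m-1-i) := by
    intro i hi
    rw [Finset.mem_range] at hi
    set k := i+1 with hk_def
    have hk1 : 1 ≤ k := by omega
    set j := m - k with hj_def
    have hj1 : 1 ≤ j := by omega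
    have hkj : k + j = m := by omega
    have hj_eq : j = m-1-i := by omega
    rw [hF_def]
    simp only
    rw [abs_mul, abs_mul, abs_mul, abs_qq_eq hk1, ← hj_def, abs_qq_eq hj1,
      abs_pow, abs_pow, show |(-20:ℝ)| = 20 by norm_num, show |(4:ℝ)| = 4 by norm_num]
    have hpow : (20:ℝ)^k * 4^j = 20^m * (1/5:ℝ)^j := by
      rw [show (20:ℝ)^m = 20^k * 20^j from by rw [← pow_add, hkj], mul_assoc, ← mul_pow]
      norm_num
    have hpair : ee k * ee j ≤ 2*Real.sqrt 2 * pp m := by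
      have := ee_pair hk1 hj1
      rwa [hkj] at this
    rw [← hj_eq]
    calc ee k * 20^k * (ee j * 4^j) = (ee k * ee j) * (20^k * 4^j) := by ring
      _ ≤ (2*Real.sqrt 2 * pp m) * (20^m * (1/5:ℝ)^j) := by
          apply mul_le_mul hpair (le_of_eq hpow) (by positivity) ?_
          have := Real.sqrt_nonneg 2
          positivity
      _ = (2*Real.sqrt 2) * (20^m * pp m) * (1/5:ℝ)^j := by ring
  have hFm1 : F (m-1) ≤ 0 := by
    rw [hF_def]
    simp only
    rw [show m - (m-1) = 1 from by omega, qq_mul_neg20 (by omega : 1 ≤ m-1)]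
    have h1 : qq 1 * 4^1 = 2 := by rw [qq_one]; norm_num
    rw [h1]
    have := ee_pos (show 1 ≤ m-1 by omega)
    nlinarith [pow_pos (show (0:ℝ) < 20 by norm_num) (m-1)]
  have hFm1abs : -F (m-1) ≤ (2*Real.sqrt 2) * (20^m * pp m) * (1/5) := by
    have h1 := hmid (m-2) (Finset.mem_range.2 (by omega))
    rw [show m-2+1 = m-1 from by omega, show m-1-(m-2) = 1 from by omega, pow_one] at h1
    calc -F (m-1) ≤ |F (m-1)| := neg_le_abs _
      _ ≤ _ := h1
  have hgeom : (∑ i ∈ range (m-2), (1/5:ℝ)^(m-1-i)) ≤ 1/20 := by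
    have hre := Finset.sum_range_reflect (fun i => (1/5:ℝ)^(i+2)) (m-2)
    have hcong : (∑ i ∈ range (m-2), (1/5:ℝ)^(m-1-i))
        = ∑ i ∈ range (m-2), (1/5:ℝ)^((m-2-1-i)+2) := by
      apply Finset.sum_congr rfl
      intro i hi
      rw [Finset.mem_range] at hi
      congr 1
      omega
    rw [hcong, hre]
    have h1 : (∑ i ∈ range (m-2), (1/5:ℝ)^(i+2))
        = (∑ i ∈ range (m-2), (1/5:ℝ)^i) * (1/25) := by
      rw [Finset.sum_mul]
      apply Finset.sum_congr rfl
      intro i _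
      rw [pow_add]
      norm_num
    rw [h1]
    have h2 : (∑ i ∈ range (m-2), (1/5:ℝ)^i) ≤ (1 - 1/5)⁻¹ := by
      apply (Summable.sum_le_tsum (L := SummationFilter.unconditional ℕ) (range (m-2)) (fun i _ => by positivity) ?_).trans_eq
      · exact tsum_geometric_of_lt_one (by norm_num) (by norm_num)
      · exact summable_geometric_of_lt_one (by norm_num) (by norm_num)
    calc (∑ i ∈ range (m-2), (1/5:ℝ)^i) * (1/25) ≤ (1 - 1/5)⁻¹ * (1/25) := by
          apply mul_le_mul_of_nonneg_right h2 (by norm_num)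
      _ = 1/20 := by norm_num
  have hT : |∑ i ∈ range (m-2), F (i+1)| ≤ (2*Real.sqrt 2) * (20^m * pp m) * (1/20) := by
    calc |∑ i ∈ range (m-2), F (i+1)| ≤ ∑ i ∈ range (m-2), |F (i+1)| :=
          Finset.abs_sum_le_sum_abs _ _
      _ ≤ ∑ i ∈ range (m-2), (2*Real.sqrt 2) * (20^m * pp m) * (1/5:ℝ)^(m-1-i) := by
          apply Finset.sum_le_sum
          intro i hi
          rw [Finset.mem_range] at hi
          exact hmid i (Finset.mem_range.2 (by omega))
      _ = (2*Real.sqrt 2) * (20^m * pp m) * (∑ i ∈ range (m-2), (1/5:ℝ)^(m-1-i)) := by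
          rw [Finset.mul_sum]
      _ ≤ (2*Real.sqrt 2) * (20^m * pp m) * (1/20) := by
          apply mul_le_mul_of_nonneg_left hgeom
          have := Real.sqrt_nonneg 2
          positivity
  have hEl : (20:ℝ)^m * pp m / 4 ≤ 20^m * ee m := by
    have h1 := mul_le_mul_of_nonneg_left (pp_le_four_ee hm1)
      (le_of_lt (pow_pos (show (0:ℝ) < 20 by norm_num) m))
    linarith
  have hEu : (20:ℝ)^m * ee m ≤ 20^m * pp m := by
    exact mul_le_mul_of_nonneg_left (ee_le_pp hm1)
      (le_of_lt (pow_pos (show (0:ℝ) < 20 by norm_num) m))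
  have hs2 := sqrt2_le
  have hs0 := Real.sqrt_nonneg 2
  have hQ : (0:ℝ) ≤ (3 - 2*Real.sqrt 2) * (20^m * pp m) :=
    mul_nonneg (by nlinarith) hP_pos.le
  have hT3 : |∑ i ∈ range (m-2), F (i+1)| ≤ (3/20) * (20^m * pp m) := by nlinarith [hT]
  have hF3 : -F (m-1) ≤ (3/5) * (20^m * pp m) := by nlinarith [hFm1abs]
  have habsT := abs_le.1 hT3
  have habsF0 := abs_le.1 hF0
  constructor
  · linarith [habsT.1, habsF0.1, hsplit, hFm, hFm1, hEl, hP_pos,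
      hsplit.symm.le, hFm.le]
  · linarith [habsT.2, habsF0.2, hsplit.le, hFm.le, hF3, hEu, hP_pos]

lemma pp_eq_rpow {n : ℕ} (hn : 1 ≤ n) : (n:ℝ)^(-(3:ℝ)/2) = pp n := by
  have hn0 : (0:ℝ) < n := by exact_mod_cast Nat.lt_of_lt_of_le Nat.zero_lt_one hn
  rw [show (-(3:ℝ)/2) = -(3/2) by norm_num, Real.rpow_neg hn0.le]
  unfold pp
  congr 1
  rw [show (3/2:ℝ) = 1 + 1/2 by norm_num, Real.rpow_add hn0, Real.rpow_one,
    ← Real.sqrt_eq_rpow]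

lemma pp_succ_le {n : ℕ} (hn : 1 ≤ n) : pp (n+1) ≤ pp n := by
  have hn1 : (1:ℝ) ≤ (n:ℝ) := by exact_mod_cast hn
  have hs : (0:ℝ) < Real.sqrt n := Real.sqrt_pos.2 (by linarith)
  unfold pp
  apply inv_anti₀ (by positivity)
  push_cast
  apply mul_le_mul (by linarith) (Real.sqrt_le_sqrt (by linarith)) hs.le (by linarith)

lemma pp_lower_succ {n : ℕ} (hn : 1 ≤ n) : pp n ≤ 3 * pp (n+1) := by
  have hn1 : (1:ℝ) ≤ (n:ℝ) := by exact_mod_cast hn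
  have hs : (0:ℝ) < Real.sqrt n := Real.sqrt_pos.2 (by linarith)
  have hs1 : (0:ℝ) < Real.sqrt ((n:ℝ)+1) := Real.sqrt_pos.2 (by linarith)
  have hkey : ((n:ℝ)+1) * Real.sqrt ((n:ℝ)+1) ≤ 3 * ((n:ℝ) * Real.sqrt n) := by
    have h1 : Real.sqrt ((n:ℝ)+1) ≤ Real.sqrt 2 * Real.sqrt n := by
      rw [← Real.sqrt_mul (by norm_num : (0:ℝ) ≤ 2)]
      exact Real.sqrt_le_sqrt (by linarith)
    have h2 : Real.sqrt ((n:ℝ)+1) ≤ 1.5 * Real.sqrt n := by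
      refine h1.trans ?_
      exact mul_le_mul_of_nonneg_right sqrt2_le hs.le
    calc ((n:ℝ)+1) * Real.sqrt ((n:ℝ)+1) ≤ (2*(n:ℝ)) * (1.5 * Real.sqrt n) := by
          apply mul_le_mul (by linarith) h2 hs1.le (by linarith)
      _ = 3 * ((n:ℝ) * Real.sqrt n) := by ring
  unfold pp
  push_cast
  rw [show (3:ℝ) * ((((n:ℝ)+1)) * Real.sqrt ((n:ℝ)+1))⁻¹
      = (((((n:ℝ)+1)) * Real.sqrt ((n:ℝ)+1)) / 3)⁻¹ from by rw [inv_div]; ring]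
  apply inv_anti₀
  · positivity
  · rw [div_le_iff₀ (by norm_num : (0:ℝ) < 3)]
    calc ((n:ℝ)+1) * Real.sqrt ((n:ℝ)+1) ≤ 3 * ((n:ℝ) * Real.sqrt n) := hkey
      _ = (n:ℝ) * Real.sqrt n * 3 := by ring

/-- If `a n` are the power-series coefficients at `0` of
`f(x) = (1 - 8x - √((1-20x)(1+4x)))/(6x)`, then `a n` is asymptotically of order
`20^n · n^{-3/2}`. -/
theorem stmt_14 (a : ℕ → ℝ)
    (ha : ∃ ε > (0 : ℝ), ∀ x : ℝ, 0 < |x| → |x| < ε →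
      HasSum (fun n => a n * x ^ n)
        ((1 - 8 * x - Real.sqrt ((1 - 20 * x) * (1 + 4 * x))) / (6 * x))) :
    ∃ C₁ > (0 : ℝ), ∃ C₂ > (0 : ℝ), ∃ N : ℕ, ∀ n : ℕ, n > N →
      C₁ * 20 ^ n * (n : ℝ) ^ (-(3 : ℝ) / 2) ≤ a n ∧
      a n ≤ C₂ * 20 ^ n * (n : ℝ) ^ (-(3 : ℝ) / 2) := by
  obtain ⟨ε, hε, hsum⟩ := ha
  have hεm : 0 < min ε (1/80 : ℝ) := lt_min hε (by norm_num)
  have hzero : ∀ n, a n - AA n = 0 := by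
    apply coeff_unique hεm
    intro x hx1 hx2
    have hx2a : |x| < ε := lt_of_lt_of_le hx2 (min_le_left _ _)
    have hx2b : |x| ≤ 1/80 := le_of_lt (lt_of_lt_of_le hx2 (min_le_right _ _))
    have hxne : x ≠ 0 := fun h => by simp [h] at hx1
    have h1 := hsum x hx1 hx2a
    have h2 := hAAsum hxne hx2b
    have h3 := h1.sub h2
    rw [sub_self] at h3
    rw [show (fun n => (a n - AA n) * x ^ n)
        = fun n => a n * x ^ n - AA n * x ^ n from funext fun n => by ring]
    exact h3
  have haA : ∀ n, a n = AA n := fun n => by have := hzero n; linarith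
  refine ⟨1/18, by norm_num, 10, by norm_num, 2, ?_⟩
  intro n hn
  have hn3 : 3 ≤ n := hn
  have hn1 : 1 ≤ n := by omega
  rw [haA n, pp_eq_rpow hn1]
  have hA : AA n = -bb (n+1)/6 := if_neg (by omega)
  rw [hA]
  obtain ⟨hl, hu⟩ := bb_est (m := n+1) (by omega)
  have h20 : (20:ℝ)^(n+1) = 20 * 20^n := by ring
  have hpow : (0:ℝ) < 20^n := by positivity
  have h2 : 20^n * pp n ≤ 20^n * (3 * pp (n+1)) :=
    mul_le_mul_of_nonneg_left (pp_lower_succ hn1) hpow.le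
  have h3 : 20^n * pp (n+1) ≤ 20^n * pp n :=
    mul_le_mul_of_nonneg_left (pp_succ_le hn1) hpow.le
  have h1 : (1/20:ℝ) * (20^(n+1) * pp (n+1)) = 20^n * pp (n+1) := by rw [h20]; ring
  have h4 : (3:ℝ) * (20^(n+1) * pp (n+1)) = 60 * (20^n * pp (n+1)) := by rw [h20]; ring
  constructor
  · rw [show (1/18:ℝ) * 20^n * pp n = (1/18) * (20^n * pp n) from by ring]
    linarith [hl, h1, h2]
  · rw [show (10:ℝ) * 20^n * pp n = 10 * (20^n * pp n) from by ring]
    linarith [hu, h4, h3]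
end
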